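/- arXiv:2403.19388 — 8 statements merged into one kernel-verified Lean document; each statement's English description precedes it below -/
import Mathlib

section
/- For every F ∈ ℕ and L ∈ [1,∞) there exist constants E, E‴ > 0 such that the following holds. Let R be a commutative ring, let (X,w) be a properly weighted R-oriented d-poset with d ≥ 1, lower irregularity L(X) ≤ L, and such that every 1-face of X contains at most F 0-faces. Let 𝓕 be an R-sheaf on X, let ε, α ≥ 0 and β > 0, and assume: (1) cbe_{−1}(X_v, w_v, 𝓕_v) ≥ ε for every v ∈ X(0); (2) the underlying weighted graph ugr(X,w) is an (α, β)-skeleton expander. Then ‖f‖_w ≥ E‴·(E·ε − α)/β for every f ∈ Z^0(X,𝓕) not lying in B^0(X,𝓕). -/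
open scoped Classical

noncomputable section

namespace FK

variable {V : Type*} [Fintype V] [PartialOrder V]

/-- The set of faces of dimension `i`. -/
def faces (dim : V → ℤ) (i : ℤ) : Finset V :=
  Finset.univ.filter fun x => dim x = i

/-- The set of faces of dimension `i` lying above `z`. -/
def facesAbove (dim : V → ℤ) (i : ℤ) (z : V) : Finset V :=
  Finset.univ.filter fun x => dim x = i ∧ z ≤ x

/-- The set of faces of dimension `i` lying below `y`. -/
def facesBelow (dim : V → ℤ) (i : ℤ) (y : V) : Finset V :=
  Finset.univ.filter fun x => dim x = i ∧ x ≤ y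

/-- The set of faces of dimension `j` lying between `x` and `z`. -/
def facesBetween (dim : V → ℤ) (j : ℤ) (x z : V) : Finset V :=
  Finset.univ.filter fun y => dim y = j ∧ x ≤ y ∧ y ≤ z

/-- Total weight of a finite set of faces. -/
def wsum (w : V → ℝ) (A : Finset V) : ℝ := ∑ x ∈ A, w x

/-- `(V, dim)` is a `d`-poset with least face `bot` (of dimension `-1`). -/
structure IsDPoset (dim : V → ℤ) (d : ℤ) (bot : V) : Prop where
  dim_strictMono : ∀ ⦃x y : V⦄, x < y → dim x < dim y
  dim_covBy : ∀ ⦃x y : V⦄, x ⋖ y → dim y = dim x + 1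
  bot_le : ∀ x : V, bot ≤ x
  dim_bot : dim bot = -1
  pure : ∀ x : V, ∃ y : V, x ≤ y ∧ dim y = d

/-- Graded poset axioms. -/
structure IsGraded (dim : V → ℤ) : Prop where
  dim_strictMono : ∀ ⦃x y : V⦄, x < y → dim x < dim y
  dim_covBy : ∀ ⦃x y : V⦄, x ⋖ y → dim y = dim x + 1

/-- `w` is a proper weight function on the `d`-poset `(V, dim)`. -/
structure IsProperWeight (dim : V → ℤ) (d : ℤ) (w : V → ℝ) : Prop where
  pos : ∀ x : V, 0 < w x
  total : wsum w (faces dim d) = 1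
  eq : ∀ x : V, w x = ∑ y ∈ facesAbove dim d x, w y / ((facesBelow dim (dim x) y).card : ℝ)

/-- The weight function induced on the link of `z`. -/
def linkWeight (dim : V → ℤ) (d : ℤ) (w : V → ℝ) (z x : V) : ℝ :=
  (wsum w (facesAbove dim d z))⁻¹ *
    ∑ y ∈ facesAbove dim d x, w y / ((facesBetween dim (dim x) z y).card : ℝ)

/-- An `R`-orientation on the graded poset `(V, dim)`. -/
structure IsOrientation (R : Type*) [CommRing R] (dim : V → ℤ) (sgn : V → V → R) : Prop where
  isUnit : ∀ ⦃x y : V⦄, x ⋖ y → IsUnit (sgn y x)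
  sum_eq_zero : ∀ ⦃x z : V⦄, x ≤ z → dim z = dim x + 2 →
    ∑ y ∈ Finset.univ.filter (fun y => x < y ∧ y < z), sgn z y * sgn y x = 0

/-- The restriction maps of a sheaf compose. -/
structure IsSheafRes (R : Type*) [CommRing R] (F : V → Type*)
    [∀ x, AddCommGroup (F x)] [∀ x, Module R (F x)]
    (res : ∀ x y : V, x ≤ y → (F x →ₗ[R] F y)) : Prop where
  refl : ∀ x : V, res x x le_rfl = LinearMap.id
  trans : ∀ ⦃x y z : V⦄ (hxy : x ≤ y) (hyz : y ≤ z),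
    (res y z hyz).comp (res x y hxy) = res x z (hxy.trans hyz)

/-- `i`-cochains with coefficients in the sheaf `F`. -/
abbrev Cochain (dim : V → ℤ) (F : V → Type*) (i : ℤ) : Type _ :=
  ∀ x : {x : V // dim x = i}, F x.1

/-- Cochains on the link of `u`, indexed by the ambient dimension `i`
(i.e. link-dimension `i - dim u - 1`). -/
abbrev LCochain (dim : V → ℤ) (F : V → Type*) (u : V) (i : ℤ) : Type _ :=
  ∀ x : {x : V // dim x = i ∧ u ≤ x}, F x.1

section Sheaf

variable {R : Type*} [CommRing R] (dim : V → ℤ) (F : V → Type*)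
  [∀ x, AddCommGroup (F x)] [∀ x, Module R (F x)]
  (sgn : V → V → R) (res : ∀ x y : V, x ≤ y → (F x →ₗ[R] F y))
  (w : V → ℝ) (d : ℤ)

/-- The coboundary map, from dimension `i` to dimension `j` (intended: `j = i + 1`). -/
def coboundary (i j : ℤ) (f : Cochain dim F i) : Cochain dim F j := fun y =>
  ∑ x : {x : V // dim x = i},
    if h : x.1 ≤ y.1 then sgn y.1 x.1 • res x.1 y.1 h (f x) else 0

/-- The coboundary map on the link of `u`. -/
def lcoboundary (u : V) (i j : ℤ) (f : LCochain dim F u i) : LCochain dim F u j := fun y =>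
  ∑ x : {x : V // dim x = i ∧ u ≤ x},
    if h : x.1 ≤ y.1 then sgn y.1 x.1 • res x.1 y.1 h (f x) else 0

/-- Weighted Hamming norm of a cochain. -/
def cnorm {i : ℤ} (f : Cochain dim F i) : ℝ :=
  ∑ x : {x : V // dim x = i}, if f x ≠ 0 then w x.1 else 0

/-- Norm of a cochain on the link of `u`, w.r.t. the weight induced on the link. -/
def lnorm (u : V) {i : ℤ} (f : LCochain dim F u i) : ℝ :=
  ∑ x : {x : V // dim x = i ∧ u ≤ x}, if f x ≠ 0 then linkWeight dim d w u x.1 else 0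

/-- `i`-cocycles. -/
def cocycles (i : ℤ) : Set (Cochain dim F i) :=
  {f | coboundary dim F sgn res i (i + 1) f = 0}

/-- `i`-coboundaries. -/
def coboundariesSet (i : ℤ) : Set (Cochain dim F i) :=
  {f | ∃ g : Cochain dim F (i - 1), coboundary dim F sgn res (i - 1) i g = f}

/-- Weighted Hamming distance from a cochain to a set of cochains. -/
def distTo {i : ℤ} (f : Cochain dim F i) (S : Set (Cochain dim F i)) : ℝ :=
  sInf ((fun g => cnorm dim F w (f - g)) '' S)

/-- Coboundaries on the link of `u`, at ambient dimension `i`. -/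
def lcoboundariesSet (u : V) (i : ℤ) : Set (LCochain dim F u i) :=
  {f | ∃ g : LCochain dim F u (i - 1), lcoboundary dim F sgn res u (i - 1) i g = f}

/-- `cbe_{i - dim u - 1}(X_u, w_u, F_u) ≥ ε`, expressed at ambient dimension `i`. -/
def LinkCbeGe (u : V) (i : ℤ) (ε : ℝ) : Prop :=
  ∀ f : LCochain dim F u i,
    ε * sInf ((fun g => lnorm dim F w d u (f - g)) '' lcoboundariesSet dim F sgn res u i)
      ≤ lnorm dim F w d u (lcoboundary dim F sgn res u i (i + 1) f)

/-- Extension of a link cochain by zero. -/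
def extendByZero (u : V) {i : ℤ} (b : LCochain dim F u i) : Cochain dim F i := fun x =>
  if h : u ≤ x.1 then b ⟨x.1, x.2, h⟩ else 0

/-- `f` is mock `q`-locally minimal at `u`. -/
def MockMinAt (q : ℝ) (m : ℤ) (f : Cochain dim F m) (u : V) : Prop :=
  ∀ g : LCochain dim F u (m - 1),
    cnorm dim F w f ≤
      cnorm dim F w (f + extendByZero dim F u (lcoboundary dim F sgn res u (m - 1) m g)) +
        q * w u

/-- `f` is mock `q`-locally minimal. -/
def MockMin (q : ℝ) (m : ℤ) (f : Cochain dim F m) : Prop :=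
  ∀ u : V, 0 ≤ dim u → dim u ≤ m → MockMinAt dim F sgn res w q m f u

end Sheaf

/-- `ugr(X_u, w_u)` is an `(α, β)`-skeleton expander. -/
def LinkUgrSkeletonExpander (dim : V → ℤ) (d : ℤ) (w : V → ℝ) (u : V) (α β : ℝ) : Prop :=
  ∀ A ⊆ facesAbove dim (dim u + 1) u,
    wsum (linkWeight dim d w u)
        ((facesAbove dim (dim u + 2) u).filter fun e =>
          ∃ x ∈ A, ∃ y ∈ A, x ≠ y ∧ x ≤ e ∧ y ≤ e)
      ≤ α * wsum (linkWeight dim d w u) A + β * wsum (linkWeight dim d w u) A ^ 2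

/-- `ugr(X, w)` is an `(α, β)`-skeleton expander. -/
def UgrSkeletonExpander (dim : V → ℤ) (w : V → ℝ) (α β : ℝ) : Prop :=
  ∀ A ⊆ faces dim 0,
    wsum w ((faces dim 1).filter fun e => ∃ x ∈ A, ∃ y ∈ A, x ≠ y ∧ x ≤ e ∧ y ≤ e)
      ≤ α * wsum w A + β * wsum w A ^ 2

/-- `NI^{1,1,2}(X, w)` is an `(α, β)`-skeleton expander. -/
def NI112SkeletonExpander (dim : V → ℤ) (w : V → ℝ) (bot : V) (α β : ℝ) : Prop :=
  ∀ A ⊆ faces dim 1,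
    wsum w ((faces dim 2).filter fun z =>
        ∃ x ∈ A, ∃ y ∈ A, x ≠ y ∧ x ≤ z ∧ y ≤ z ∧ ∀ t : V, t ≤ x → t ≤ y → t = bot)
      ≤ α * wsum w A + β * wsum w A ^ 2

/-- Pairs of an `i`-face and a `k`-face that are incident. -/
def incidentPairs (dim : V → ℤ) (i k : ℤ) : Finset (V × V) :=
  Finset.univ.filter fun p => dim p.1 = i ∧ dim p.2 = k ∧ p.1 ≤ p.2

/-- `F^max_{i,j,k}(X)`. -/
def Fmax (dim : V → ℤ) (i j k : ℤ) : ℕ :=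
  (incidentPairs dim i k).sup fun p => (facesBetween dim j p.1 p.2).card

/-- `F^min_{i,j,k}(X)`. -/
def Fmin (dim : V → ℤ) (i j k : ℤ) : ℕ :=
  if h : (incidentPairs dim i k).Nonempty then
    ((incidentPairs dim i k).image fun p => (facesBetween dim j p.1 p.2).card).min'
      (h.image _)
  else 0

end FK

section Aux

open FK

variable {V : Type*} [Fintype V] [PartialOrder V]

private lemma interp_aux (dim : V → ℤ)
    (h1 : ∀ ⦃x y : V⦄, x < y → dim x < dim y)
    (h2 : ∀ ⦃x y : V⦄, x ⋖ y → dim y = dim x + 1) :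
    ∀ n : ℕ, ∀ x y : V, x ≤ y → (dim y - dim x).toNat ≤ n →
      ∀ j : ℤ, dim x ≤ j → j ≤ dim y → ∃ z, x ≤ z ∧ z ≤ y ∧ dim z = j := by
  intro n
  induction n with
  | zero =>
      intro x y hxy hn j hj1 hj2
      rcases eq_or_lt_of_le hxy with rfl | hlt
      · exact ⟨x, le_rfl, le_rfl, le_antisymm hj2 hj1 ▸ rfl⟩
      · have := h1 hlt; omega
  | succ n ih =>
      intro x y hxy hn j hj1 hj2
      by_cases hx : dim x = j
      · exact ⟨x, le_rfl, hxy, hx⟩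
      have hjx : dim x < j := lt_of_le_of_ne hj1 hx
      have hlt : x < y := lt_of_le_of_ne hxy (by rintro rfl; omega)
      by_cases hcov : x ⋖ y
      · refine ⟨y, hxy, le_rfl, ?_⟩
        have := h2 hcov; omega
      · have hex : ∃ c, x < c ∧ c < y := by
          by_contra hno
          push_neg at hno
          exact hcov ⟨hlt, fun c h1c h2c => hno c h1c h2c⟩
        obtain ⟨c, hxc, hcy⟩ := hex
        have hd1 := h1 hxc
        have hd2 := h1 hcy
        by_cases hjc : j ≤ dim c
        · obtain ⟨z, hz1, hz2, hz3⟩ := ih x c hxc.le (by omega) j hj1 hjc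
          exact ⟨z, hz1, hz2.trans hcy.le, hz3⟩
        · obtain ⟨z, hz1, hz2, hz3⟩ := ih c y hcy.le (by omega) j (by omega) hj2
          exact ⟨z, hxc.le.trans hz1, hz2, hz3⟩

lemma fkExistsBetween (dim : V → ℤ) {d : ℤ} {bot : V} (hP : IsDPoset dim d bot)
    {x z : V} (hxz : x ≤ z) {j : ℤ} (hj1 : dim x ≤ j) (hj2 : j ≤ dim z) :
    ∃ y, x ≤ y ∧ y ≤ z ∧ dim y = j :=
  interp_aux dim hP.dim_strictMono hP.dim_covBy (dim z - dim x).toNat x z hxz le_rfl j hj1 hj2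

lemma between_card_pos {dim : V → ℤ} {d : ℤ} {bot : V} (hP : IsDPoset dim d bot)
    {x z : V} (hxz : x ≤ z) {j : ℤ} (hj1 : dim x ≤ j) (hj2 : j ≤ dim z) :
    0 < (facesBetween dim j x z).card := by
  obtain ⟨y, h1, h2, h3⟩ := fkExistsBetween dim hP hxz hj1 hj2
  refine Finset.card_pos.mpr ⟨y, ?_⟩
  simp [FK.facesBetween, h1, h2, h3]

lemma mem_incident {dim : V → ℤ} {x z : V} {i k : ℤ}
    (hx : dim x = i) (hz : dim z = k) (hxz : x ≤ z) :
    (x, z) ∈ incidentPairs dim i k := by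
  simp [FK.incidentPairs, hx, hz, hxz]

lemma card_le_Fmax {dim : V → ℤ} {x z : V} {i j k : ℤ}
    (hx : dim x = i) (hz : dim z = k) (hxz : x ≤ z) :
    (facesBetween dim j x z).card ≤ Fmax dim i j k :=
  Finset.le_sup (f := fun p => (facesBetween dim j p.1 p.2).card) (mem_incident hx hz hxz)

lemma Fmin_le_card {dim : V → ℤ} {x z : V} {i j k : ℤ}
    (hx : dim x = i) (hz : dim z = k) (hxz : x ≤ z) :
    Fmin dim i j k ≤ (facesBetween dim j x z).card := by
  have hmem := mem_incident hx hz hxz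
  unfold FK.Fmin
  rw [dif_pos ⟨_, hmem⟩]
  exact Finset.min'_le _ _ (Finset.mem_image_of_mem _ hmem)

lemma Fmin_pos {dim : V → ℤ} {d : ℤ} {bot : V} (hP : IsDPoset dim d bot)
    {i j k : ℤ} (hij : i ≤ j) (hjk : j ≤ k)
    {x z : V} (hx : dim x = i) (hz : dim z = k) (hxz : x ≤ z) :
    0 < Fmin dim i j k := by
  have hne : (incidentPairs dim i k).Nonempty := ⟨_, mem_incident hx hz hxz⟩
  unfold FK.Fmin
  rw [dif_pos hne]
  obtain ⟨p, hp, hq⟩ := Finset.mem_image.mp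
    (Finset.min'_mem ((incidentPairs dim i k).image fun p => (facesBetween dim j p.1 p.2).card)
      (hne.image _))
  rw [← hq]
  have hp' : dim p.1 = i ∧ dim p.2 = k ∧ p.1 ≤ p.2 := by
    simpa [FK.incidentPairs] using hp
  exact between_card_pos hP hp'.2.2 (by omega) (by omega)

lemma facesBelow_eq_between {dim : V → ℤ} {d : ℤ} {bot : V} (hP : IsDPoset dim d bot)
    (j : ℤ) (y : V) : facesBelow dim j y = facesBetween dim j bot y := by
  ext t
  simp [FK.facesBelow, FK.facesBetween, hP.bot_le t]

lemma sum_subtype_ite (p : V → Prop) [Fintype {x : V // p x}]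
    (c : {x : V // p x} → Prop) [∀ x : {x : V // p x}, Decidable (c x)]
    (g : V → ℝ) (B : Finset V)
    (hB : ∀ e ∈ B, p e) (hc : ∀ x : {x : V // p x}, c x ↔ x.1 ∈ B) :
    (∑ x : {x : V // p x}, if c x then g x.1 else 0) = ∑ e ∈ B, g e := by
  classical
  have h1 : (∑ x : {x : V // p x}, if c x then g x.1 else 0)
      = ∑ x : {x : V // p x}, if x.1 ∈ B then g x.1 else 0 :=
    Finset.sum_congr rfl fun x _ => by rw [if_congr (hc x) rfl rfl]
  rw [h1, ← Finset.sum_subtype (Finset.univ.filter p)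
      (fun x => by simp) (fun e => if e ∈ B then g e else 0),
    Finset.sum_ite_mem]
  have h2 : Finset.univ.filter p ∩ B = B :=
    Finset.inter_eq_right.mpr (fun e he => by simp [hB e he])
  rw [h2]

end Aux
set_option maxHeartbeats 1000000 in
/-- lower bound on the 0-cocycle distance. -/
theorem statement2 (Fc : ℕ) (L : ℝ) (hL : 1 ≤ L) :
    ∃ E E''' : ℝ, 0 < E ∧ 0 < E''' ∧
      ∀ (V : Type) (_ : Fintype V) (_ : PartialOrder V) (dim : V → ℤ) (d : ℤ) (bot : V),
        FK.IsDPoset dim d bot → 1 ≤ d →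
        (∀ i j k : ℤ, -1 ≤ i → i ≤ j → j ≤ k → k ≤ d →
          (FK.Fmax dim i j k : ℝ) ≤ L * (FK.Fmin dim i j k : ℝ)) →
        (∀ e : V, dim e = 1 → (FK.facesBelow dim 0 e).card ≤ Fc) →
        ∀ w : V → ℝ, FK.IsProperWeight dim d w →
        ∀ (R : Type) (_ : CommRing R) (sgn : V → V → R), FK.IsOrientation R dim sgn →
        ∀ (F : V → Type) (_ : ∀ x, AddCommGroup (F x)) (_ : ∀ x, Module R (F x))
          (res : ∀ x y : V, x ≤ y → (F x →ₗ[R] F y)), FK.IsSheafRes R F res →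
        ∀ ε α β : ℝ, 0 ≤ ε → 0 ≤ α → 0 < β →
        (∀ v : V, dim v = 0 → FK.LinkCbeGe dim F sgn res w d v 0 ε) →
        FK.UgrSkeletonExpander dim w α β →
        ∀ f : FK.Cochain dim F 0,
          f ∈ FK.cocycles dim F sgn res 0 → f ∉ FK.coboundariesSet dim F sgn res 0 →
          E''' * (E * ε - α) / β ≤ FK.cnorm dim F w f := by

  classical
  have hL0 : (0:ℝ) < L := lt_of_lt_of_le one_pos hL
  have hFc1 : (0:ℝ) < max (Fc:ℝ) 1 := lt_of_lt_of_le one_pos (le_max_right _ _)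
  have hCpos : (0:ℝ) < L ^ 2 * max (Fc:ℝ) 1 := mul_pos (pow_pos hL0 2) hFc1
  refine ⟨1 / (L ^ 2 * max (Fc:ℝ) 1), 1, div_pos one_pos hCpos, one_pos, ?_⟩
  intro V instF instP dim d bot hP hd hLb hFc w hw R instR sgn hsgn F instAG instM res hres
    ε α β hε hα hβ hcbe hexp f hfZ hfB
  have hbotdim := hP.dim_bot
  -- support of f
  set A : Finset V :=
    Finset.univ.filter (fun x => ∃ h : dim x = 0, f ⟨x, h⟩ ≠ 0) with hAdef
  have hmemA : ∀ x : V, x ∈ A ↔ ∃ h : dim x = 0, f ⟨x, h⟩ ≠ 0 := by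
    intro x
    simp only [hAdef, Finset.mem_filter, Finset.mem_univ, true_and]
  have hAsub : A ⊆ FK.faces dim 0 := by
    intro x hx
    obtain ⟨h, -⟩ := (hmemA x).mp hx
    simp [FK.faces, h]
  -- cnorm f = wsum w A
  have K0' := sum_subtype_ite (fun x => dim x = 0) (fun x => f x ≠ 0) w A
      (fun e he => ((hmemA e).mp he).choose) (fun x => by
        rw [hmemA]
        exact ⟨fun h => ⟨x.2, h⟩, fun ⟨h, hh⟩ => hh⟩)
  have K0 : FK.cnorm dim F w f = FK.wsum w A := K0'
  -- f is nonzero, so wsum w A > 0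
  have h00 : (0 : FK.Cochain dim F 0) ∈ FK.coboundariesSet dim F sgn res 0 := by
    refine ⟨0, ?_⟩
    funext y
    show (∑ x : {x : V // dim x = 0 - 1},
      if h : x.1 ≤ y.1 then sgn y.1 x.1 • res x.1 y.1 h ((0 : FK.Cochain dim F (0-1)) x) else 0)
        = (0 : F y.1)
    refine Finset.sum_eq_zero fun x _ => ?_
    have hz0 : ((0 : FK.Cochain dim F (0-1)) x) = 0 := rfl
    split
    · rw [hz0, map_zero, smul_zero]
    · rfl
  have hfne : f ≠ 0 := by
    rintro rfl
    exact hfB h00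
  have hfex : ∃ x : {x : V // dim x = 0}, f x ≠ 0 := by
    by_contra h
    push_neg at h
    exact hfne (funext fun x => h x)
  obtain ⟨x0, hx0⟩ := hfex
  have hx0A : x0.1 ∈ A := (hmemA x0.1).mpr ⟨x0.2, hx0⟩
  have hWpos : 0 < FK.wsum w A :=
    lt_of_lt_of_le (hw.pos x0.1) (Finset.single_le_sum (fun i _ => (hw.pos i).le) hx0A)
  -- bad edges of a vertex
  set badE : V → Finset V := fun v =>
    Finset.univ.filter (fun e => dim e = 1 ∧ v ≤ e ∧
      ∃ (hv : dim v = 0) (h : v ≤ e), res v e h (f ⟨v, hv⟩) ≠ 0) with hbadEdef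
  have hmem_badE : ∀ v e : V, e ∈ badE v ↔ (dim e = 1 ∧ v ≤ e ∧
      ∃ (hv : dim v = 0) (h : v ≤ e), res v e h (f ⟨v, hv⟩) ≠ 0) := by
    intro v e
    simp only [hbadEdef, Finset.mem_filter, Finset.mem_univ, true_and]
  -- global constants
  have hM0nonneg : (0:ℝ) ≤ (FK.Fmax dim (-1) 0 d : ℝ) := Nat.cast_nonneg _
  have hLM0 : (FK.Fmax dim (-1) 0 d : ℝ) ≤ L * (FK.Fmin dim (-1) 0 d : ℝ) :=
    hLb (-1) 0 d le_rfl (by norm_num) (by omega) le_rfl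
  have hM1L : (FK.Fmax dim 0 1 d : ℝ) ≤ L * (FK.Fmin dim 0 1 d : ℝ) :=
    hLb 0 1 d (by norm_num) (by norm_num) hd le_rfl
  have hm0pos : (0:ℝ) < (FK.Fmin dim (-1) 0 d : ℝ) := by
    obtain ⟨y0, hy1, hy2⟩ := hP.pure bot
    exact_mod_cast Fmin_pos hP (by norm_num) (by omega) hP.dim_bot hy2 hy1
  -- STEP: per-vertex inequality
  have hK2 : ∀ v ∈ A, ε * w v ≤ L ^ 2 * ∑ e ∈ badE v, w e := by
    intro v hvA
    obtain ⟨hv0, hfv⟩ := (hmemA v).mp hvA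
    -- weight of faces above v
    have hN : 0 < FK.wsum w (FK.facesAbove dim d v) := by
      obtain ⟨y0, hy1, hy2⟩ := hP.pure v
      refine Finset.sum_pos' (fun i _ => (hw.pos i).le) ⟨y0, ?_, hw.pos y0⟩
      simp [FK.facesAbove, hy1, hy2]
    have hNne : FK.wsum w (FK.facesAbove dim d v) ≠ 0 := hN.ne'
    -- unique 0-face above v
    letI huniq : Unique {u : V // dim u = 0 ∧ v ≤ u} :=
      { default := ⟨v, hv0, le_rfl⟩
        uniq := fun x => Subtype.ext (by
          rcases x.2.2.lt_or_eq with h | h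
          · have h1 := hP.dim_strictMono h
            have h2 := x.2.1
            omega
          · exact h.symm) }
    -- the link cochain
    set fv : FK.LCochain dim F v 0 := fun x => res v x.1 x.2.2 (f ⟨v, hv0⟩) with hfvdef
    have hfv_ne : fv ⟨v, hv0, le_rfl⟩ ≠ 0 := by
      show res v v le_rfl (f ⟨v, hv0⟩) ≠ 0
      rw [hres.refl v]
      exact hfv
    -- linkWeight at v itself is 1
    have hLW1 : FK.linkWeight dim d w v v = 1 := by
      have hset1 : ∀ y ∈ FK.facesAbove dim d v,
          FK.facesBetween dim (dim v) v y = {v} := by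
        intro y hy
        rw [FK.facesAbove, Finset.mem_filter] at hy
        ext t
        simp only [FK.facesBetween, Finset.mem_filter, Finset.mem_univ, true_and,
          Finset.mem_singleton]
        constructor
        · rintro ⟨ht1, ht2, ht3⟩
          rcases ht2.lt_or_eq with h | h
          · have := hP.dim_strictMono h
            omega
          · exact h.symm
        · rintro rfl
          exact ⟨rfl, le_rfl, hy.2.2⟩
      show (FK.wsum w (FK.facesAbove dim d v))⁻¹ *
        (∑ y ∈ FK.facesAbove dim d v, w y / ((FK.facesBetween dim (dim v) v y).card : ℝ)) = 1
      rw [Finset.sum_congr rfl (fun y hy => by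
        rw [hset1 y hy, Finset.card_singleton, Nat.cast_one, div_one])]
      exact inv_mul_cancel₀ hNne
    -- lnorm of fv is 1
    have hlnormfv : FK.lnorm dim F w d v fv = 1 := by
      show (∑ x : {x : V // dim x = 0 ∧ v ≤ x},
        if fv x ≠ 0 then FK.linkWeight dim d w v x.1 else 0) = 1
      rw [Fintype.sum_unique]
      show (if fv ⟨v, hv0, le_rfl⟩ ≠ 0 then FK.linkWeight dim d w v v else 0) = 1
      rw [if_pos hfv_ne, hLW1]
    -- coboundaries at level -1 in the link are trivial
    have hempty : IsEmpty {x : V // dim x = 0 - 1 ∧ v ≤ x} := by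
      constructor
      rintro ⟨x, hx, hvx⟩
      rcases hvx.lt_or_eq with h | h
      · have := hP.dim_strictMono h
        omega
      · rw [← h] at hx
        omega
    have hzero : ∀ g : FK.LCochain dim F v (0 - 1),
        FK.lcoboundary dim F sgn res v (0 - 1) 0 g = 0 := by
      intro g
      funext y
      show (∑ x : {x : V // dim x = 0 - 1 ∧ v ≤ x},
        if h : x.1 ≤ y.1 then sgn y.1 x.1 • res x.1 y.1 h (g x) else 0) = (0 : F y.1)
      haveI := hempty
      rw [Finset.univ_eq_empty, Finset.sum_empty]
    have hset : FK.lcoboundariesSet dim F sgn res v 0 = {(0 : FK.LCochain dim F v 0)} := by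
      ext h
      simp only [FK.lcoboundariesSet, Set.mem_setOf_eq, Set.mem_singleton_iff]
      constructor
      · rintro ⟨g, rfl⟩
        exact hzero g
      · rintro rfl
        exact ⟨0, hzero 0⟩
    -- the coboundary of fv in the link
    have hval : ∀ x : {x : V // dim x = 0 + 1 ∧ v ≤ x},
        FK.lcoboundary dim F sgn res v 0 (0 + 1) fv x
          = sgn x.1 v • res v x.1 x.2.2 (f ⟨v, hv0⟩) := by
      intro x
      show (∑ u : {u : V // dim u = 0 ∧ v ≤ u},
        if h : u.1 ≤ x.1 then sgn x.1 u.1 • res u.1 x.1 h (fv u) else 0) = _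
      rw [Fintype.sum_unique]
      show (if h : v ≤ x.1 then sgn x.1 v • res v x.1 h (fv ⟨v, hv0, le_rfl⟩) else 0) = _
      rw [dif_pos x.2.2]
      show sgn x.1 v • res v x.1 x.2.2 (res v v le_rfl (f ⟨v, hv0⟩)) = _
      rw [hres.refl v]
      rfl
    have hcovE : ∀ x : V, dim x = 1 → v ≤ x → v ⋖ x := by
      intro x hx1 hvx
      refine ⟨lt_of_le_of_ne hvx (fun h => by rw [← h] at hx1; omega), ?_⟩
      intro c h1c h2c
      have := hP.dim_strictMono h1c
      have := hP.dim_strictMono h2c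
      omega
    have hsmul_ne : ∀ (x : V), dim x = 1 → v ≤ x → ∀ (m : F x),
        (sgn x v • m ≠ 0 ↔ m ≠ 0) := by
      intro x hx1 hvx m
      obtain ⟨u, hu⟩ := hsgn.isUnit (hcovE x hx1 hvx)
      constructor
      · intro h hm
        exact h (by rw [hm, smul_zero])
      · intro hm h
        apply hm
        have h2 : m = ((u⁻¹ : Rˣ) : R) • (sgn x v • m) := by
          rw [← hu, smul_smul, Units.inv_mul, one_smul]
        rw [h2, h, smul_zero]
    -- translate lnorm of the link coboundary into a sum over bad edges
    have hRHS : FK.lnorm dim F w d v (FK.lcoboundary dim F sgn res v 0 (0 + 1) fv)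
        = ∑ e ∈ badE v, FK.linkWeight dim d w v e := by
      have hrhs' := sum_subtype_ite (fun e => dim e = 0 + 1 ∧ v ≤ e)
        (fun x => FK.lcoboundary dim F sgn res v 0 (0 + 1) fv x ≠ 0)
        (fun e => FK.linkWeight dim d w v e) (badE v)
        (fun e he => by
          obtain ⟨h1, h2, -⟩ := (hmem_badE v e).mp he
          exact ⟨by omega, h2⟩)
        (fun x => by
          show FK.lcoboundary dim F sgn res v 0 (0 + 1) fv x ≠ 0 ↔ x.1 ∈ badE v
          rw [hval x, hmem_badE]
          have hx1 : dim x.1 = 1 := by have := x.2.1; omega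
          rw [hsmul_ne x.1 hx1 x.2.2]
          constructor
          · intro hne
            exact ⟨hx1, x.2.2, hv0, x.2.2, hne⟩
          · rintro ⟨-, -, hv0', h', hne⟩
            exact hne)
      exact hrhs'
    -- the cbe hypothesis
    have hcbe' := hcbe v hv0 fv
    rw [hset, Set.image_singleton, sub_zero, csInf_singleton, hlnormfv, mul_one, hRHS] at hcbe'
    -- pointwise comparison of link weights with global weights on bad edges
    have hStepB : ∀ e : V, dim e = 1 → v ≤ e →
        FK.linkWeight dim d w v e ≤ (FK.wsum w (FK.facesAbove dim d v))⁻¹ *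
          ((L * (FK.Fmax dim (-1) 0 d : ℝ)) * w e) := by
      intro e he1 hve
      have hlw : FK.linkWeight dim d w v e = (FK.wsum w (FK.facesAbove dim d v))⁻¹ *
          ∑ y ∈ FK.facesAbove dim d e, w y / ((FK.facesBetween dim 1 v y).card : ℝ) := by
        unfold FK.linkWeight
        rw [he1]
      have hwe : w e = ∑ y ∈ FK.facesAbove dim d e, w y / ((FK.facesBelow dim 1 y).card : ℝ) := by
        rw [hw.eq e, he1]
      rw [hlw]
      refine mul_le_mul_of_nonneg_left ?_ (inv_nonneg.mpr hN.le)
      rw [hwe, Finset.mul_sum]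
      refine Finset.sum_le_sum fun y hy => ?_
      rw [FK.facesAbove, Finset.mem_filter] at hy
      obtain ⟨-, hyd, hey⟩ := hy
      have hvy : v ≤ y := hve.trans hey
      have hc1 : 0 < (FK.facesBetween dim 1 v y).card :=
        between_card_pos hP hvy (by omega) (by omega)
      have hb1 : 0 < (FK.facesBelow dim 1 y).card := by
        rw [facesBelow_eq_between hP]
        exact between_card_pos hP (hP.bot_le y) (by omega) (by omega)
      have hble : (FK.facesBelow dim 1 y).card
          ≤ (FK.facesBelow dim 0 y).card * FK.Fmax dim 0 1 d := by
        have hsub : FK.facesBelow dim 1 y ⊆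
            (FK.facesBelow dim 0 y).biUnion (fun v' => FK.facesBetween dim 1 v' y) := by
          intro e' he'
          rw [FK.facesBelow, Finset.mem_filter] at he'
          obtain ⟨-, he1', he2'⟩ := he'
          obtain ⟨v', hv'1, hv'2, hv'3⟩ :=
            fkExistsBetween dim hP (hP.bot_le e') (j := 0) (by omega) (by omega)
          rw [Finset.mem_biUnion]
          refine ⟨v', ?_, ?_⟩
          · simp [FK.facesBelow, hv'3, hv'2.trans he2']
          · simp [FK.facesBetween, he1', hv'2, he2']
        calc (FK.facesBelow dim 1 y).card
            ≤ ((FK.facesBelow dim 0 y).biUnion (fun v' => FK.facesBetween dim 1 v' y)).card :=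
              Finset.card_le_card hsub
          _ ≤ ∑ v' ∈ FK.facesBelow dim 0 y, (FK.facesBetween dim 1 v' y).card :=
              Finset.card_biUnion_le
          _ ≤ ∑ v' ∈ FK.facesBelow dim 0 y, FK.Fmax dim 0 1 d := by
              refine Finset.sum_le_sum fun v' hv' => ?_
              rw [FK.facesBelow, Finset.mem_filter] at hv'
              exact card_le_Fmax hv'.2.1 hyd hv'.2.2
          _ = (FK.facesBelow dim 0 y).card * FK.Fmax dim 0 1 d := by
              rw [Finset.sum_const, smul_eq_mul]
      have haM0 : ((FK.facesBelow dim 0 y).card : ℝ) ≤ (FK.Fmax dim (-1) 0 d : ℝ) := by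
        have : (FK.facesBelow dim 0 y).card ≤ FK.Fmax dim (-1) 0 d := by
          rw [facesBelow_eq_between hP]
          exact card_le_Fmax hP.dim_bot hyd (hP.bot_le y)
        exact_mod_cast this
      have hminc : (FK.Fmin dim 0 1 d : ℝ) ≤ ((FK.facesBetween dim 1 v y).card : ℝ) := by
        exact_mod_cast Fmin_le_card hv0 hyd hvy
      have hkey : ((FK.facesBelow dim 1 y).card : ℝ)
          ≤ (L * (FK.Fmax dim (-1) 0 d : ℝ)) * ((FK.facesBetween dim 1 v y).card : ℝ) := by
        calc ((FK.facesBelow dim 1 y).card : ℝ)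
            ≤ ((FK.facesBelow dim 0 y).card : ℝ) * (FK.Fmax dim 0 1 d : ℝ) := by
              exact_mod_cast hble
          _ ≤ (FK.Fmax dim (-1) 0 d : ℝ) * (FK.Fmax dim 0 1 d : ℝ) :=
              mul_le_mul_of_nonneg_right haM0 (Nat.cast_nonneg _)
          _ ≤ (FK.Fmax dim (-1) 0 d : ℝ) * (L * (FK.Fmin dim 0 1 d : ℝ)) :=
              mul_le_mul_of_nonneg_left hM1L hM0nonneg
          _ ≤ (FK.Fmax dim (-1) 0 d : ℝ) * (L * ((FK.facesBetween dim 1 v y).card : ℝ)) := by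
              refine mul_le_mul_of_nonneg_left
                (mul_le_mul_of_nonneg_left hminc hL0.le) hM0nonneg
          _ = (L * (FK.Fmax dim (-1) 0 d : ℝ)) * ((FK.facesBetween dim 1 v y).card : ℝ) := by
              ring
      have hc1' : (0:ℝ) < ((FK.facesBetween dim 1 v y).card : ℝ) := by exact_mod_cast hc1
      have hb1' : (0:ℝ) < ((FK.facesBelow dim 1 y).card : ℝ) := by exact_mod_cast hb1
      have hrw2 : (L * (FK.Fmax dim (-1) 0 d : ℝ)) *
          (w y / ((FK.facesBelow dim 1 y).card : ℝ))
          = ((L * (FK.Fmax dim (-1) 0 d : ℝ)) * w y) / ((FK.facesBelow dim 1 y).card : ℝ) := by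
        ring
      rw [hrw2, div_le_div_iff₀ hc1' hb1']
      have hmm := mul_le_mul_of_nonneg_left hkey (hw.pos y).le
      have e3 : w y * ((L * (FK.Fmax dim (-1) 0 d : ℝ)) * ((FK.facesBetween dim 1 v y).card : ℝ))
          = ((L * (FK.Fmax dim (-1) 0 d : ℝ)) * w y) * ((FK.facesBetween dim 1 v y).card : ℝ) := by
        ring
      linarith [hmm, e3]
    -- combine: eps <= N⁻¹ L M0 S
    have hS0 : (0:ℝ) ≤ ∑ e ∈ badE v, w e := Finset.sum_nonneg fun e _ => (hw.pos e).le
    have hchain : ε ≤ (FK.wsum w (FK.facesAbove dim d v))⁻¹ *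
        ((L * (FK.Fmax dim (-1) 0 d : ℝ)) * ∑ e ∈ badE v, w e) := by
      calc ε ≤ ∑ e ∈ badE v, FK.linkWeight dim d w v e := hcbe'
        _ ≤ ∑ e ∈ badE v, (FK.wsum w (FK.facesAbove dim d v))⁻¹ *
              ((L * (FK.Fmax dim (-1) 0 d : ℝ)) * w e) := by
            refine Finset.sum_le_sum fun e he => ?_
            obtain ⟨h1, h2, -⟩ := (hmem_badE v e).mp he
            exact hStepB e h1 h2
        _ = (FK.wsum w (FK.facesAbove dim d v))⁻¹ *
              ((L * (FK.Fmax dim (-1) 0 d : ℝ)) * ∑ e ∈ badE v, w e) := by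
            rw [← Finset.mul_sum, ← Finset.mul_sum]
    have hεN : ε * FK.wsum w (FK.facesAbove dim d v)
        ≤ (L * (FK.Fmax dim (-1) 0 d : ℝ)) * ∑ e ∈ badE v, w e := by
      have h2 : ((FK.wsum w (FK.facesAbove dim d v))⁻¹ *
          ((L * (FK.Fmax dim (-1) 0 d : ℝ)) * ∑ e ∈ badE v, w e)) *
          FK.wsum w (FK.facesAbove dim d v)
          = (L * (FK.Fmax dim (-1) 0 d : ℝ)) * ∑ e ∈ badE v, w e := by
        rw [mul_comm, ← mul_assoc, mul_inv_cancel₀ hNne, one_mul]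
      have h3 := mul_le_mul_of_nonneg_right hchain hN.le
      rw [h2] at h3
      exact h3
    -- N >= m0 * w v
    have hm0N : (FK.Fmin dim (-1) 0 d : ℝ) * w v ≤ FK.wsum w (FK.facesAbove dim d v) := by
      have hwv : w v = ∑ y ∈ FK.facesAbove dim d v,
          w y / ((FK.facesBelow dim 0 y).card : ℝ) := by
        rw [hw.eq v, hv0]
      rw [hwv, Finset.mul_sum]
      show _ ≤ ∑ y ∈ FK.facesAbove dim d v, w y
      refine Finset.sum_le_sum fun y hy => ?_
      rw [FK.facesAbove, Finset.mem_filter] at hy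
      have hyd : dim y = d := hy.2.1
      have ha1 : 0 < (FK.facesBelow dim 0 y).card := by
        rw [facesBelow_eq_between hP]
        exact between_card_pos hP (hP.bot_le y) (by omega) (by omega)
      have ham : (FK.Fmin dim (-1) 0 d : ℝ) ≤ ((FK.facesBelow dim 0 y).card : ℝ) := by
        rw [facesBelow_eq_between hP]
        exact_mod_cast Fmin_le_card hP.dim_bot hyd (hP.bot_le y)
      have ha1' : (0:ℝ) < ((FK.facesBelow dim 0 y).card : ℝ) := by exact_mod_cast ha1
      have h2 : ((FK.facesBelow dim 0 y).card : ℝ) *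
          (w y / ((FK.facesBelow dim 0 y).card : ℝ)) = w y := by
        rw [mul_comm, div_mul_cancel₀ _ ha1'.ne']
      linarith [mul_le_mul_of_nonneg_right ham
        (div_nonneg (hw.pos y).le ha1'.le), h2]
    -- assemble the per-vertex bound
    have h5 : (ε * w v) * (FK.Fmin dim (-1) 0 d : ℝ)
        ≤ (L ^ 2 * ∑ e ∈ badE v, w e) * (FK.Fmin dim (-1) 0 d : ℝ) := by
      have h3 := mul_le_mul_of_nonneg_left hm0N hε
      have h4 : (L * (FK.Fmax dim (-1) 0 d : ℝ)) * ∑ e ∈ badE v, w e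
          ≤ (L * (L * (FK.Fmin dim (-1) 0 d : ℝ))) * ∑ e ∈ badE v, w e :=
        mul_le_mul_of_nonneg_right (mul_le_mul_of_nonneg_left hLM0 hL0.le) hS0
      have e1 : ε * ((FK.Fmin dim (-1) 0 d : ℝ) * w v) = (ε * w v) * (FK.Fmin dim (-1) 0 d : ℝ) := by
        ring
      have e2 : (L * (L * (FK.Fmin dim (-1) 0 d : ℝ))) * ∑ e ∈ badE v, w e
          = (L ^ 2 * ∑ e ∈ badE v, w e) * (FK.Fmin dim (-1) 0 d : ℝ) := by
        ring
      linarith [h3, hεN, h4, e1, e2]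
    exact le_of_mul_le_mul_right h5 hm0pos
  -- the target edge set
  set T : Finset V := (FK.faces dim 1).filter
    (fun e => ∃ x ∈ A, ∃ y ∈ A, x ≠ y ∧ x ≤ e ∧ y ≤ e) with hTdef
  -- bad edges are in T (cocycle argument)
  have hbadsubT : ∀ v ∈ A, badE v ⊆ T := by
    intro v hvA e he
    obtain ⟨hv0, hfv⟩ := (hmemA v).mp hvA
    obtain ⟨he1, hve, hv0', h', hresne⟩ := (hmem_badE v e).mp he
    have h0 : FK.coboundary dim F sgn res 0 (0 + 1) f = 0 := hfZ
    have he1' : dim e = 0 + 1 := by omega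
    have hsum0 : (∑ x : {x : V // dim x = 0},
        if h : x.1 ≤ e then sgn e x.1 • res x.1 e h (f x) else 0) = 0 := by
      have := congrFun h0 ⟨e, he1'⟩
      exact this
    have hcov : v ⋖ e := by
      refine ⟨lt_of_le_of_ne hve (fun h => by rw [← h] at he1; omega), ?_⟩
      intro c h1c h2c
      have := hP.dim_strictMono h1c
      have := hP.dim_strictMono h2c
      omega
    have hterm : (if h : (⟨v, hv0⟩ : {x : V // dim x = 0}).1 ≤ e
        then sgn e v • res v e h (f ⟨v, hv0⟩) else 0) ≠ 0 := by
      rw [dif_pos hve]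
      obtain ⟨u, hu⟩ := hsgn.isUnit hcov
      intro h
      apply hresne
      have h2 : res v e h' (f ⟨v, hv0'⟩)
          = ((u⁻¹ : Rˣ) : R) • (sgn e v • res v e hve (f ⟨v, hv0⟩)) := by
        rw [← hu, smul_smul, Units.inv_mul, one_smul]
      rw [h2, h, smul_zero]
    have hex : ∃ u0 : {x : V // dim x = 0}, u0 ≠ ⟨v, hv0⟩ ∧
        (if h : u0.1 ≤ e then sgn e u0.1 • res u0.1 e h (f u0) else 0) ≠ 0 := by
      by_contra hno
      push_neg at hno
      have := Finset.sum_eq_single_of_mem (⟨v, hv0⟩ : {x : V // dim x = 0})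
        (Finset.mem_univ _) (fun u _ hu => hno u hu)
      rw [hsum0] at this
      exact hterm this.symm
    obtain ⟨u0, hune, hu0⟩ := hex
    have hue : u0.1 ≤ e := by
      by_contra h
      rw [dif_neg h] at hu0
      exact hu0 rfl
    have hfu : f u0 ≠ 0 := by
      intro h
      rw [dif_pos hue, h, map_zero, smul_zero] at hu0
      exact hu0 rfl
    have huA : u0.1 ∈ A := (hmemA u0.1).mpr ⟨u0.2, hfu⟩
    have hvune : v ≠ u0.1 := fun h => hune (Subtype.ext h.symm)
    rw [hTdef, Finset.mem_filter]
    refine ⟨by simp [FK.faces, he1], v, hvA, u0.1, huA, hvune, hve, hue⟩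
  -- sum the per-vertex bounds
  have hsum1 : ε * FK.wsum w A ≤ L ^ 2 * ∑ v ∈ A, ∑ e ∈ badE v, w e := by
    show ε * (∑ x ∈ A, w x) ≤ _
    rw [Finset.mul_sum, Finset.mul_sum]
    exact Finset.sum_le_sum hK2
  have hsum2 : ∑ v ∈ A, ∑ e ∈ badE v, w e ≤ (max (Fc:ℝ) 1) * FK.wsum w T := by
    have h1 : ∀ v ∈ A, (∑ e ∈ badE v, w e) = ∑ e ∈ T, if e ∈ badE v then w e else 0 := by
      intro v hv
      rw [← Finset.sum_filter]
      congr 1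
      ext e
      simp only [Finset.mem_filter]
      exact ⟨fun h => ⟨hbadsubT v hv h, h⟩, fun h => h.2⟩
    rw [Finset.sum_congr rfl h1, Finset.sum_comm]
    show _ ≤ max (Fc:ℝ) 1 * ∑ e ∈ T, w e
    rw [Finset.mul_sum]
    refine Finset.sum_le_sum fun e heT => ?_
    rw [← Finset.sum_filter, Finset.sum_const, nsmul_eq_mul]
    refine mul_le_mul_of_nonneg_right ?_ (hw.pos e).le
    have heT' := Finset.mem_filter.mp heT
    have he1 : dim e = 1 := by
      have := heT'.1
      simp only [FK.faces, Finset.mem_filter, Finset.mem_univ, true_and] at this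
      exact this
    have hsub : A.filter (fun v => e ∈ badE v) ⊆ FK.facesBelow dim 0 e := by
      intro v hv'
      rw [Finset.mem_filter] at hv'
      obtain ⟨hvA, hvbad⟩ := hv'
      obtain ⟨hv0, -⟩ := (hmemA v).mp hvA
      obtain ⟨-, hve, -⟩ := (hmem_badE v e).mp hvbad
      rw [FK.facesBelow, Finset.mem_filter]
      exact ⟨Finset.mem_univ _, hv0, hve⟩
    calc ((A.filter (fun v => e ∈ badE v)).card : ℝ)
        ≤ ((FK.facesBelow dim 0 e).card : ℝ) := by
          exact_mod_cast Finset.card_le_card hsub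
      _ ≤ (Fc : ℝ) := by exact_mod_cast hFc e he1
      _ ≤ max (Fc:ℝ) 1 := le_max_left _ _
  have hT : FK.wsum w T ≤ α * FK.wsum w A + β * FK.wsum w A ^ 2 := hexp A hAsub
  have hTnn : (0:ℝ) ≤ FK.wsum w T := Finset.sum_nonneg fun e _ => (hw.pos e).le
  have hmain : ε * FK.wsum w A ≤ (L ^ 2 * max (Fc:ℝ) 1) *
      (α * FK.wsum w A + β * FK.wsum w A ^ 2) := by
    calc ε * FK.wsum w A ≤ L ^ 2 * ∑ v ∈ A, ∑ e ∈ badE v, w e := hsum1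
      _ ≤ L ^ 2 * ((max (Fc:ℝ) 1) * FK.wsum w T) :=
          mul_le_mul_of_nonneg_left hsum2 (sq_nonneg L)
      _ ≤ L ^ 2 * ((max (Fc:ℝ) 1) * (α * FK.wsum w A + β * FK.wsum w A ^ 2)) :=
          mul_le_mul_of_nonneg_left (mul_le_mul_of_nonneg_left hT hFc1.le) (sq_nonneg L)
      _ = (L ^ 2 * max (Fc:ℝ) 1) * (α * FK.wsum w A + β * FK.wsum w A ^ 2) := by ring
  -- conclude
  rw [K0]
  rw [one_mul, div_le_iff₀ hβ]
  have h2' : ε * FK.wsum w A ≤ ((L ^ 2 * max (Fc:ℝ) 1) *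
      (α + β * FK.wsum w A)) * FK.wsum w A := by
    have e4 : (L ^ 2 * max (Fc:ℝ) 1) * (α * FK.wsum w A + β * FK.wsum w A ^ 2)
        = ((L ^ 2 * max (Fc:ℝ) 1) * (α + β * FK.wsum w A)) * FK.wsum w A := by ring
    linarith [hmain, e4]
  have h3 : ε ≤ (L ^ 2 * max (Fc:ℝ) 1) * (α + β * FK.wsum w A) :=
    le_of_mul_le_mul_right h2' hWpos
  have h4 : 1 / (L ^ 2 * max (Fc:ℝ) 1) * ε ≤ α + β * FK.wsum w A := by
    rw [div_mul_eq_mul_div, div_le_iff₀ hCpos]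
    have e5 : (L ^ 2 * max (Fc:ℝ) 1) * (α + β * FK.wsum w A)
        = (α + β * FK.wsum w A) * (L ^ 2 * max (Fc:ℝ) 1) := by ring
    linarith [h3, e5]
  linarith [h4]
end
end

section
/- Let R be a commutative ring, let (X,w) be a properly weighted R-oriented d-poset, let 𝓕 be an R-sheaf on X, and let k ∈ {0,…,d−1}. Then for every h ∈ C^k(X,𝓕) there exists g ∈ C^{k−1}(X,𝓕) such that h + d_{k−1} g is mock locally minimal and ‖h + d_{k−1} g‖_w ≤ ‖h‖_w. -/
open scoped Classical

noncomputable section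

section AuxLemmas

variable {V : Type*} [Fintype V] [PartialOrder V]
variable {R : Type*} [CommRing R] (dim : V → ℤ) (F : V → Type*)
  [∀ x, AddCommGroup (F x)] [∀ x, Module R (F x)]
  (sgn : V → V → R) (res : ∀ x y : V, x ≤ y → (F x →ₗ[R] F y))

lemma aux_coboundary_zero (i j : ℤ) :
    FK.coboundary dim F sgn res i j (0 : FK.Cochain dim F i) = 0 := by
  funext y
  show (∑ x : {x : V // dim x = i}, _) = (0 : F y.1)
  refine Finset.sum_eq_zero fun x _ => ?_
  by_cases hxy : x.1 ≤ y.1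
  · rw [dif_pos hxy]
    show sgn y.1 x.1 • res x.1 y.1 hxy (0 : F x.1) = 0
    rw [map_zero, smul_zero]
  · rw [dif_neg hxy]

lemma aux_coboundary_add (i j : ℤ) (a b : FK.Cochain dim F i) :
    FK.coboundary dim F sgn res i j (a + b) =
      FK.coboundary dim F sgn res i j a + FK.coboundary dim F sgn res i j b := by
  funext y
  show FK.coboundary dim F sgn res i j (a + b) y =
    FK.coboundary dim F sgn res i j a y + FK.coboundary dim F sgn res i j b y
  unfold FK.coboundary
  rw [← Finset.sum_add_distrib]
  refine Finset.sum_congr rfl fun x _ => ?_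
  by_cases hxy : x.1 ≤ y.1
  · rw [dif_pos hxy, dif_pos hxy, dif_pos hxy, Pi.add_apply, map_add, smul_add]
  · rw [dif_neg hxy, dif_neg hxy, dif_neg hxy, add_zero]

/-- Auxiliary function for `aux_ext_comm`. -/
def auxF {j : ℤ} (u : V) (i : ℤ) (g : FK.LCochain dim F u i)
    (y : {x : V // dim x = j}) (x : V) : F y.1 :=
  if hx : dim x = i ∧ u ≤ x ∧ x ≤ y.1 then
    sgn y.1 x • res x y.1 hx.2.2 (g ⟨x, hx.1, hx.2.1⟩) else 0

lemma auxF_pos {j : ℤ} (u : V) (i : ℤ) (g : FK.LCochain dim F u i)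
    (y : {x : V // dim x = j}) (x : V) (hx : dim x = i ∧ u ≤ x ∧ x ≤ y.1) :
    auxF dim F sgn res u i g y x =
      sgn y.1 x • res x y.1 hx.2.2 (g ⟨x, hx.1, hx.2.1⟩) := dif_pos hx

lemma auxF_neg {j : ℤ} (u : V) (i : ℤ) (g : FK.LCochain dim F u i)
    (y : {x : V // dim x = j}) (x : V) (hx : ¬(dim x = i ∧ u ≤ x ∧ x ≤ y.1)) :
    auxF dim F sgn res u i g y x = 0 := dif_neg hx

/-- Extension by zero commutes with the coboundary. -/
lemma aux_ext_comm (u : V) (i j : ℤ) (g : FK.LCochain dim F u i) :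
    FK.coboundary dim F sgn res i j (FK.extendByZero dim F u g) =
      FK.extendByZero dim F u (FK.lcoboundary dim F sgn res u i j g) := by
  classical
  funext y
  show (∑ x : {x : V // dim x = i},
      if h : x.1 ≤ y.1 then sgn y.1 x.1 • res x.1 y.1 h (FK.extendByZero dim F u g x) else 0) = _
  unfold FK.extendByZero
  by_cases hu : u ≤ y.1
  · rw [dif_pos hu]
    show _ = FK.lcoboundary dim F sgn res u i j g ⟨y.1, y.2, hu⟩
    unfold FK.lcoboundary
    have L : (∑ x : {x : V // dim x = i},
        if h : x.1 ≤ y.1 then sgn y.1 x.1 • res x.1 y.1 h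
          (if h' : u ≤ x.1 then g ⟨x.1, x.2, h'⟩ else 0) else 0)
        = ∑ x ∈ Finset.univ.filter fun x => dim x = i,
            auxF dim F sgn res u i g y x := by
      rw [Finset.sum_subtype (p := fun x => dim x = i)
        (Finset.univ.filter fun x => dim x = i) (by simp)
        (auxF dim F sgn res u i g y)]
      refine Finset.sum_congr rfl fun x _ => ?_
      by_cases hxy : x.1 ≤ y.1
      · by_cases hux : u ≤ x.1
        · rw [dif_pos hxy, dif_pos hux, auxF_pos dim F sgn res u i g y x.1 ⟨x.2, hux, hxy⟩]
        · rw [dif_pos hxy, dif_neg hux, map_zero, smul_zero,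
            auxF_neg dim F sgn res u i g y x.1 (fun hc => hux hc.2.1)]
      · rw [dif_neg hxy, auxF_neg dim F sgn res u i g y x.1 (fun hc => hxy hc.2.2)]
    have Rs : (∑ x : {x : V // dim x = i ∧ u ≤ x},
        if h : x.1 ≤ y.1 then sgn y.1 x.1 • res x.1 y.1 h (g x) else 0)
        = ∑ x ∈ Finset.univ.filter fun x => dim x = i ∧ u ≤ x,
            auxF dim F sgn res u i g y x := by
      rw [Finset.sum_subtype (p := fun x => dim x = i ∧ u ≤ x)
        (Finset.univ.filter fun x => dim x = i ∧ u ≤ x) (by simp)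
        (auxF dim F sgn res u i g y)]
      refine Finset.sum_congr rfl fun x _ => ?_
      by_cases hxy : x.1 ≤ y.1
      · rw [dif_pos hxy, auxF_pos dim F sgn res u i g y x.1 ⟨x.2.1, x.2.2, hxy⟩]
      · rw [dif_neg hxy, auxF_neg dim F sgn res u i g y x.1 (fun hc => hxy hc.2.2)]
    rw [L, Rs]
    refine (Finset.sum_subset ?_ ?_).symm
    · intro x hx
      simp only [Finset.mem_filter, Finset.mem_univ, true_and] at hx ⊢
      exact hx.1
    · intro x _ hx
      simp only [Finset.mem_filter, Finset.mem_univ, true_and, not_and] at hx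
      exact auxF_neg dim F sgn res u i g y x (fun hc => hx hc.1 hc.2.1)
  · rw [dif_neg hu]
    refine Finset.sum_eq_zero fun x _ => ?_
    by_cases hxy : x.1 ≤ y.1
    · rw [dif_pos hxy, dif_neg (fun hux => hu (hux.trans hxy)), map_zero, smul_zero]
    · rw [dif_neg hxy]

end AuxLemmas

/-- every cochain can be corrected into a mock locally minimal one
without increasing its norm. -/
theorem statement4
    (V : Type) [Fintype V] [PartialOrder V] (dim : V → ℤ) (d : ℤ) (bot : V)
    (hX : FK.IsDPoset dim d bot)
    (w : V → ℝ) (hw : FK.IsProperWeight dim d w)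
    (R : Type) [CommRing R] (sgn : V → V → R) (hsgn : FK.IsOrientation R dim sgn)
    (F : V → Type) [∀ x, AddCommGroup (F x)] [∀ x, Module R (F x)]
    (res : ∀ x y : V, x ≤ y → (F x →ₗ[R] F y)) (hres : FK.IsSheafRes R F res)
    (k : ℕ) (hk : (k : ℤ) ≤ d - 1) :
    ∀ h : FK.Cochain dim F (k : ℤ),
      ∃ g : FK.Cochain dim F ((k : ℤ) - 1),
        FK.MockMin dim F sgn res w 0 (k : ℤ)
            (h + FK.coboundary dim F sgn res ((k : ℤ) - 1) (k : ℤ) g) ∧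
          FK.cnorm dim F w (h + FK.coboundary dim F sgn res ((k : ℤ) - 1) (k : ℤ) g) ≤
            FK.cnorm dim F w h := by
  intro h
  classical
  set φ : FK.Cochain dim F ((k : ℤ) - 1) → ℝ := fun g =>
    FK.cnorm dim F w (h + FK.coboundary dim F sgn res ((k : ℤ) - 1) (k : ℤ) g) with hφ
  have hfin : (Set.range φ).Finite := by
    have hsub : Set.range φ ⊆
        (fun s : Finset {x : V // dim x = (k : ℤ)} => ∑ x ∈ s, w x.1) '' Set.univ := by
      rintro _ ⟨g, rfl⟩
      refine ⟨Finset.univ.filter fun x =>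
        (h + FK.coboundary dim F sgn res ((k : ℤ) - 1) (k : ℤ) g) x ≠ 0, trivial, ?_⟩
      simp [hφ, FK.cnorm, Finset.sum_filter]
    exact (Set.finite_univ.image _).subset hsub
  have hne : (Set.range φ).Nonempty := ⟨φ 0, 0, rfl⟩
  obtain ⟨r, ⟨g₀, hg₀⟩, hmin⟩ := Set.exists_min_image _ id hfin hne
  refine ⟨g₀, ?_, ?_⟩
  · intro u _ _ g'
    rw [zero_mul, add_zero]
    have key := aux_ext_comm dim F sgn res u ((k : ℤ) - 1) (k : ℤ) g'
    have hrw : h + FK.coboundary dim F sgn res ((k : ℤ) - 1) (k : ℤ) g₀ +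
        FK.extendByZero dim F u
          (FK.lcoboundary dim F sgn res u ((k : ℤ) - 1) (k : ℤ) g') =
        h + FK.coboundary dim F sgn res ((k : ℤ) - 1) (k : ℤ)
          (g₀ + FK.extendByZero dim F u g') := by
      rw [aux_coboundary_add, ← key, add_assoc]
    rw [hrw]
    have h1 : φ g₀ ≤ φ (g₀ + FK.extendByZero dim F u g') := by
      rw [hg₀]
      exact hmin _ ⟨_, rfl⟩
    exact h1
  · have h1 : φ g₀ ≤ φ 0 := by
      rw [hg₀]
      exact hmin _ ⟨0, rfl⟩
    have h0 : φ 0 = FK.cnorm dim F w h := by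
      show FK.cnorm dim F w
        (h + FK.coboundary dim F sgn res ((k : ℤ) - 1) (k : ℤ) 0) = _
      rw [aux_coboundary_zero, add_zero]
    rw [h0] at h1
    exact h1
end
end

section
/- Let R be a commutative ring, let X be a d-poset with a weight function w : X → ℝ_{>0} and an R-orientation, and let 𝓕 be an R-sheaf on X. Let k ∈ {0,…,d}, let f, g ∈ C^k(X,𝓕) satisfy g(x) ∈ {f(x), 0} for every x ∈ X(k), let q ∈ [0,1], and let u ∈ X with dim u ≤ k. If f is mock q-locally minimal at u (i.e., ‖f‖_w ≤ ‖f + b^u‖_w + q·w(u) for every b ∈ B^{k−dim u−1}(X_u,𝓕_u)), then g is mock q-locally minimal at u. -/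
open scoped Classical

noncomputable section

/-- restricting a cochain preserves mock `q`-local minimality at a face. -/
theorem statement5
    (V : Type) [Fintype V] [PartialOrder V] (dim : V → ℤ) (d : ℤ) (bot : V)
    (hX : FK.IsDPoset dim d bot)
    (w : V → ℝ) (hw : ∀ x : V, 0 < w x)
    (R : Type) [CommRing R] (sgn : V → V → R) (hsgn : FK.IsOrientation R dim sgn)
    (F : V → Type) [∀ x, AddCommGroup (F x)] [∀ x, Module R (F x)]
    (res : ∀ x y : V, x ≤ y → (F x →ₗ[R] F y)) (hres : FK.IsSheafRes R F res)
    (k : ℕ) (hk : (k : ℤ) ≤ d)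
    (f g : FK.Cochain dim F (k : ℤ))
    (hg : ∀ x, g x = f x ∨ g x = 0)
    (q : ℝ) (hq : q ∈ Set.Icc (0 : ℝ) 1)
    (u : V) (hu : dim u ≤ (k : ℤ))
    (hf : FK.MockMinAt dim F sgn res w q (k : ℤ) f u) :
    FK.MockMinAt dim F sgn res w q (k : ℤ) g u := by
  intro b
  have hfb := hf b
  set B := FK.extendByZero dim F u (FK.lcoboundary dim F sgn res u ((k : ℤ) - 1) k b) with hB
  have key : FK.cnorm dim F w g - FK.cnorm dim F w (g + B)
      ≤ FK.cnorm dim F w f - FK.cnorm dim F w (f + B) := by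
    unfold FK.cnorm
    rw [← Finset.sum_sub_distrib, ← Finset.sum_sub_distrib]
    apply Finset.sum_le_sum
    intro x _
    have hgx : (g + B) x = g x + B x := rfl
    have hfx : (f + B) x = f x + B x := rfl
    rcases hg x with h | h
    · rw [hgx, hfx, h]
    · rw [hgx, hfx, h, zero_add]
      have hwx := (hw x.1).le
      by_cases hb0 : B x = 0
      · simp [hb0]
      · by_cases hf0 : f x = 0 <;> by_cases hfb0 : f x + B x = 0 <;>
          simp [hb0, hf0, hfb0] <;> linarith
  linarith
end
end

section
/- Let G be a finite group, A, B ⊆ G∖{1} symmetric generating sets with gag^{−1} ≠ b for all a ∈ A, b ∈ B, g ∈ G, let 𝔽 be a finite field, and let C_A ⊆ 𝔽^A, C_B ⊆ 𝔽^B be linear codes. Let Z^0 ⊆ (C_A⊗C_B)^G be the 𝔽-subspace of ensembles (m_g)_{g∈G} satisfying r_a(m_g) = r_{a^{−1}}(m_{ag}) and c_b(m_g) = c_{b^{−1}}(m_{gb}) for all g ∈ G, a ∈ A, b ∈ B. Then dim_𝔽 Z^0 ≥ |A||B||G|·(r(C_A)·r(C_B) − 3/4), where r(C_A) = dim_𝔽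 C_A/|A| and r(C_B) = dim_𝔽 C_B/|B|; equivalently, the rate of the code Z^0 ⊆ Σ^G with alphabet Σ = C_A⊗C_B satisfies r(Z^0) ≥ (4·r(C_A)·r(C_B) − 3)/(4·r(C_A)·r(C_B)). -/
open scoped Classical
set_option linter.unusedSectionVars false

noncomputable section

namespace FK6

variable {𝔽 : Type*} [Field 𝔽]

/-- The tensor code `C_A ⊗ C_B`, viewed as the space of matrices all of whose rows lie
in `C_B` and all of whose columns lie in `C_A`. -/
def tensorCode {A B : Type*} (CA : Submodule 𝔽 (A → 𝔽)) (CB : Submodule 𝔽 (B → 𝔽)) :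
    Submodule 𝔽 (A → B → 𝔽) where
  carrier := {m | (∀ a : A, m a ∈ CB) ∧ ∀ b : B, (fun a => m a b) ∈ CA}
  add_mem' := by
    intro m₁ m₂ h₁ h₂
    exact ⟨fun a => CB.add_mem (h₁.1 a) (h₂.1 a), fun b => CA.add_mem (h₁.2 b) (h₂.2 b)⟩
  zero_mem' := ⟨fun a => CB.zero_mem, fun b => CA.zero_mem⟩
  smul_mem' := by
    intro c m hm
    exact ⟨fun a => CB.smul_mem c (hm.1 a), fun b => CA.smul_mem c (hm.2 b)⟩

/-- `κ`-agreement testability of the tensor code `C_A ⊗ C_B`. -/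
def AgreementTestable {A B : Type*} [Fintype A] [Fintype B]
    (CA : Submodule 𝔽 (A → 𝔽)) (CB : Submodule 𝔽 (B → 𝔽)) (κ : ℝ) : Prop :=
  ∀ m₁ m₂ : A → B → 𝔽,
    (∀ b : B, (fun a => m₁ a b) ∈ CA) → (∀ a : A, m₂ a ∈ CB) →
    ∃ m ∈ tensorCode CA CB,
      κ * (((Finset.univ.filter fun a : A => m₂ a ≠ m a).card : ℝ) /
            (2 * (Fintype.card A : ℝ)) +
          ((Finset.univ.filter fun b : B => (fun a => m₁ a b) ≠ fun a => m a b).card : ℝ) /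
            (2 * (Fintype.card B : ℝ)))
        ≤ ((Finset.univ.filter fun p : A × B => m₁ p.1 p.2 ≠ m₂ p.1 p.2).card : ℝ) /
            ((Fintype.card A : ℝ) * (Fintype.card B : ℝ))

variable {G : Type*} [Group G] [Fintype G] [DecidableEq G]

/-- The `0`-cocycle code `Z⁰(X, 𝓕)` of the sheaf `𝓕` on the double Cayley complex
`Cay(A, G, B)`: ensembles of tensor codewords satisfying
`r_a(m_g) = r_{a⁻¹}(m_{ag})` and `c_b(m_g) = c_{b⁻¹}(m_{gb})`. -/
def Z0 (A B : Finset G) (CA : Submodule 𝔽 (↥A → 𝔽)) (CB : Submodule 𝔽 (↥B → 𝔽))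
    (hA : ∀ a ∈ A, a⁻¹ ∈ A) (hB : ∀ b ∈ B, b⁻¹ ∈ B) :
    Submodule 𝔽 (G → ↥A → ↥B → 𝔽) where
  carrier := {m | (∀ g : G, m g ∈ tensorCode CA CB) ∧
    ∀ (g : G) (a : ↥A) (b : ↥B),
      m g a b = m ((a : G) * g) ⟨(a : G)⁻¹, hA _ a.2⟩ b ∧
      m g a b = m (g * (b : G)) a ⟨(b : G)⁻¹, hB _ b.2⟩}
  add_mem' := by
    intro m₁ m₂ h₁ h₂
    refine ⟨fun g => (tensorCode CA CB).add_mem (h₁.1 g) (h₂.1 g), fun g a b => ?_⟩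
    constructor
    · simp only [Pi.add_apply]
      rw [(h₁.2 g a b).1, (h₂.2 g a b).1]
    · simp only [Pi.add_apply]
      rw [(h₁.2 g a b).2, (h₂.2 g a b).2]
  zero_mem' := ⟨fun _ => Submodule.zero_mem _, fun _ _ _ => ⟨rfl, rfl⟩⟩
  smul_mem' := by
    intro c m hm
    refine ⟨fun g => (tensorCode CA CB).smul_mem c (hm.1 g), fun g a b => ?_⟩
    constructor
    · simp only [Pi.smul_apply]
      rw [(hm.2 g a b).1]
    · simp only [Pi.smul_apply]
      rw [(hm.2 g a b).2]

/-- The set of edges of the double Cayley complex `Cay(A, G, B)` whose constraint is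
violated by the word `f`. -/
def violatedEdges (A B : Finset G) (hA : ∀ a ∈ A, a⁻¹ ∈ A) (hB : ∀ b ∈ B, b⁻¹ ∈ B)
    (f : G → ↥A → ↥B → 𝔽) : Finset (Finset G) :=
  Finset.univ.filter fun e =>
    (∃ (g : G) (a : ↥A), e = {g, (a : G) * g} ∧
        f g a ≠ f ((a : G) * g) ⟨(a : G)⁻¹, hA _ a.2⟩) ∨
    ∃ (g : G) (b : ↥B), e = {g, g * (b : G)} ∧
        (fun a => f g a b) ≠ fun a => f (g * (b : G)) a ⟨(b : G)⁻¹, hB _ b.2⟩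

/-- The left Cayley graph `Cay(A, G)`, with its natural weight function, is a
`λ`-expander: every eigenvalue of its weighted adjacency operator on the space of
mean-zero functions is at most `λ`. -/
def IsLeftCayleyExpander (A : Finset G) (lam : ℝ) : Prop :=
  ∀ (μ : ℝ) (f : G → ℝ), f ≠ 0 → (∑ g : G, f g) = 0 →
    (∀ g : G, (∑ a ∈ A, f (a * g)) / (A.card : ℝ) = μ * f g) → μ ≤ lam

/-- The right Cayley graph `Cay(G, B)`, with its natural weight function, is a
`λ`-expander. -/
def IsRightCayleyExpander (B : Finset G) (lam : ℝ) : Prop :=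
  ∀ (μ : ℝ) (f : G → ℝ), f ≠ 0 → (∑ g : G, f g) = 0 →
    (∀ g : G, (∑ b ∈ B, f (g * b)) / (B.card : ℝ) = μ * f g) → μ ≤ lam

end FK6


lemma FK6.finrank_tensorCode_ge {𝔽 : Type*} [Field 𝔽] {A B : Type*} [Fintype A] [Fintype B]
    (CA : Submodule 𝔽 (A → 𝔽)) (CB : Submodule 𝔽 (B → 𝔽)) :
    Module.finrank 𝔽 CA * Module.finrank 𝔽 CB ≤ Module.finrank 𝔽 (FK6.tensorCode CA CB) := by
  set kA := Module.finrank 𝔽 CA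
  set kB := Module.finrank 𝔽 CB
  let u : Module.Basis (Fin kA) 𝔽 CA := Module.finBasis 𝔽 CA
  let v : Module.Basis (Fin kB) 𝔽 CB := Module.finBasis 𝔽 CB
  have lu : LinearIndependent 𝔽 (fun i => ((u i : A → 𝔽))) :=
    u.linearIndependent.map' CA.subtype CA.ker_subtype
  have lv : LinearIndependent 𝔽 (fun j => ((v j : B → 𝔽))) :=
    v.linearIndependent.map' CB.subtype CB.ker_subtype
  let M : Fin kA × Fin kB → (A → B → 𝔽) := fun p a b => (u p.1 : A → 𝔽) a * (v p.2 : B → 𝔽) b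
  let L : ((Fin kA × Fin kB) → 𝔽) →ₗ[𝔽] (A → B → 𝔽) :=
    ∑ p : Fin kA × Fin kB, (LinearMap.proj p).smulRight (M p)
  have hL : ∀ h, L h = ∑ p : Fin kA × Fin kB, h p • M p := by
    intro h
    simp [L, LinearMap.sum_apply]
  have hmem : ∀ h, L h ∈ FK6.tensorCode CA CB := by
    intro h
    rw [hL]
    exact Submodule.sum_mem _ (fun p _ => Submodule.smul_mem _ _ (by
      refine ⟨fun a => ?_, fun b => ?_⟩
      · have : (M p) a = ((u p.1 : A → 𝔽) a) • ((v p.2 : B → 𝔽)) := by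
          funext b; simp [M, smul_eq_mul]
        rw [this]
        exact Submodule.smul_mem _ _ (v p.2).2
      · have : (fun a => (M p) a b) = ((v p.2 : B → 𝔽) b) • ((u p.1 : A → 𝔽)) := by
          funext a; simp [M, smul_eq_mul, mul_comm]
        rw [this]
        exact Submodule.smul_mem _ _ (u p.1).2))
  have hinj : Function.Injective L := by
    rw [← LinearMap.ker_eq_bot, LinearMap.ker_eq_bot']
    intro h hh
    rw [hL] at hh
    have key : ∀ b i, (∑ j, h (i, j) * (v j : B → 𝔽) b) = 0 := by
      intro b i
      have h0 : ∀ a, (∑ p : Fin kA × Fin kB, h p * ((u p.1 : A → 𝔽) a * (v p.2 : B → 𝔽) b)) = 0 := by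
        intro a
        have := congrFun (congrFun hh a) b
        simpa [M, Finset.sum_apply] using this
      have h1 : (∑ i : Fin kA, (∑ j, h (i, j) * (v j : B → 𝔽) b) • (u i : A → 𝔽)) = 0 := by
        funext a
        simp only [Finset.sum_apply, Pi.smul_apply, smul_eq_mul, Pi.zero_apply]
        rw [← h0 a, Fintype.sum_prod_type]
        congr 1; funext i
        rw [Finset.sum_mul]
        congr 1; funext j
        ring
      exact Fintype.linearIndependent_iff.mp lu _ h1 i
    have key2 : ∀ i, h i = 0 := by
      intro ⟨i, j⟩
      have h2 : (∑ j : Fin kB, h (i, j) • (v j : B → 𝔽)) = 0 := by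
        funext b
        simpa [Finset.sum_apply, smul_eq_mul] using key b i
      exact Fintype.linearIndependent_iff.mp lv _ h2 j
    funext p; exact key2 p
  have := LinearMap.finrank_le_finrank_of_injective
    (f := L.codRestrict (FK6.tensorCode CA CB) hmem)
    (fun x y hxy => hinj (congrArg Subtype.val hxy))
  simpa [Module.finrank_pi] using this

namespace FK6Aux

variable {G : Type*} [Group G] [Fintype G] [DecidableEq G]

def sfun (A B : Finset G) (hA : ∀ a ∈ A, a⁻¹ ∈ A) :
    G × ↥A × ↥B → G × ↥A × ↥B :=
  fun x => ((x.2.1 : G) * x.1, ⟨(x.2.1 : G)⁻¹, hA _ x.2.1.2⟩, x.2.2)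

def tfun (A B : Finset G) (hB : ∀ b ∈ B, b⁻¹ ∈ B) :
    G × ↥A × ↥B → G × ↥A × ↥B :=
  fun x => (x.1 * (x.2.2 : G), x.2.1, ⟨(x.2.2 : G)⁻¹, hB _ x.2.2.2⟩)

variable {A B : Finset G} {hA : ∀ a ∈ A, a⁻¹ ∈ A} {hB : ∀ b ∈ B, b⁻¹ ∈ B}

lemma sfun_sfun (x : G × ↥A × ↥B) : sfun A B hA (sfun A B hA x) = x := by
  obtain ⟨g, a, b⟩ := x
  simp [sfun, mul_assoc]

lemma tfun_tfun (x : G × ↥A × ↥B) : tfun A B hB (tfun A B hB x) = x := by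
  obtain ⟨g, a, b⟩ := x
  simp [tfun, mul_assoc]

lemma sfun_tfun (x : G × ↥A × ↥B) :
    sfun A B hA (tfun A B hB x) = tfun A B hB (sfun A B hA x) := by
  obtain ⟨g, a, b⟩ := x
  simp [sfun, tfun, mul_assoc]

def act (A B : Finset G) (hA : ∀ a ∈ A, a⁻¹ ∈ A) (hB : ∀ b ∈ B, b⁻¹ ∈ B) :
    Bool → Bool → (G × ↥A × ↥B) → (G × ↥A × ↥B) :=
  fun i j x => (cond i (sfun A B hA) id) ((cond j (tfun A B hB) id) x)

lemma act_act (i j i' j' : Bool) (x : G × ↥A × ↥B) :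
    act A B hA hB i j (act A B hA hB i' j' x) = act A B hA hB (xor i i') (xor j j') x := by
  cases i <;> cases j <;> cases i' <;> cases j' <;>
    simp [act, sfun_sfun, tfun_tfun, sfun_tfun]

def myrel (A B : Finset G) (hA : ∀ a ∈ A, a⁻¹ ∈ A) (hB : ∀ b ∈ B, b⁻¹ ∈ B) :
    Setoid (G × ↥A × ↥B) where
  r x y := ∃ i j : Bool, y = act A B hA hB i j x
  iseqv := by
    constructor
    · exact fun x => ⟨false, false, rfl⟩
    · rintro x y ⟨i, j, rfl⟩
      exact ⟨i, j, by rw [act_act]; simp [act]⟩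
    · rintro x y z ⟨i, j, rfl⟩ ⟨i', j', rfl⟩
      exact ⟨xor i' i, xor j' j, act_act i' j' i j x⟩

lemma sfun_ne (hA1 : (1 : G) ∉ A) (x : G × ↥A × ↥B) : sfun A B hA x ≠ x := by
  obtain ⟨g, a, b⟩ := x
  intro h
  have h1 : (a : G) * g = g := congrArg Prod.fst h
  have a2 : (a : G) ∈ A := a.2
  rw [mul_eq_right.mp h1] at a2
  exact hA1 a2

lemma tfun_ne (hB1 : (1 : G) ∉ B) (x : G × ↥A × ↥B) : tfun A B hB x ≠ x := by
  obtain ⟨g, a, b⟩ := x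
  intro h
  have h1 : g * (b : G) = g := congrArg Prod.fst h
  have b2 : (b : G) ∈ B := b.2
  rw [mul_eq_left.mp h1] at b2
  exact hB1 b2

lemma sfun_ne_tfun (htnc : ∀ (g : G), ∀ a ∈ A, ∀ b ∈ B, g * a * g⁻¹ ≠ b)
    (x : G × ↥A × ↥B) : sfun A B hA x ≠ tfun A B hB x := by
  obtain ⟨g, a, b⟩ := x
  intro h
  have h1 : (a : G) * g = g * (b : G) := congrArg Prod.fst h
  refine htnc g⁻¹ (a : G) a.2 (b : G) b.2 ?_
  rw [inv_inv, mul_assoc, h1]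
  group

lemma ne_sfun_tfun (htnc : ∀ (g : G), ∀ a ∈ A, ∀ b ∈ B, g * a * g⁻¹ ≠ b)
    (hAi : ∀ a ∈ A, a⁻¹ ∈ A) (x : G × ↥A × ↥B) : x ≠ sfun A B hA (tfun A B hB x) := by
  obtain ⟨g, a, b⟩ := x
  intro h
  have h1 : g = (a : G) * (g * (b : G)) := congrArg Prod.fst h
  refine htnc g⁻¹ (a : G)⁻¹ (hAi _ a.2) (b : G) b.2 ?_
  rw [inv_inv]
  have h2 : (a : G)⁻¹ * g = g * (b : G) := by
    conv_lhs => rw [h1]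
    group
  rw [mul_assoc, h2]
  group

lemma card_eq (hA1 : (1 : G) ∉ A) (hB1 : (1 : G) ∉ B)
    (htnc : ∀ (g : G), ∀ a ∈ A, ∀ b ∈ B, g * a * g⁻¹ ≠ b) :
    Fintype.card (G × ↥A × ↥B) = 4 * Fintype.card (Quotient (myrel A B hA hB)) := by
  classical
  have hinj : Function.Injective (sfun A B hA) :=
    Function.LeftInverse.injective (f := sfun A B hA) (fun x => sfun_sfun x)
  have key : ∀ q : Quotient (myrel A B hA hB),
      (Finset.univ.filter fun x : G × ↥A × ↥B => Quotient.mk _ x = q).card = 4 := by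
    intro q
    obtain ⟨x, rfl⟩ := Quotient.exists_rep q
    have hset : (Finset.univ.filter fun y : G × ↥A × ↥B =>
          Quotient.mk (myrel A B hA hB) y = Quotient.mk (myrel A B hA hB) x)
        = {x, sfun A B hA x, tfun A B hB x, sfun A B hA (tfun A B hB x)} := by
      ext y
      simp only [Finset.mem_filter, Finset.mem_univ, true_and, Finset.mem_insert,
        Finset.mem_singleton, Quotient.eq]
      constructor
      · intro hy
        obtain ⟨i, j, rfl⟩ := (myrel A B hA hB).symm hy
        cases i <;> cases j <;> simp [act] <;> tauto
      · rintro (rfl | rfl | rfl | rfl)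
        · exact ⟨false, false, rfl⟩
        · exact ⟨true, false, (sfun_sfun (hA := hA) x).symm⟩
        · exact ⟨false, true, (tfun_tfun (hB := hB) x).symm⟩
        · exact ⟨true, true, by
            show x = sfun A B hA (tfun A B hB (sfun A B hA (tfun A B hB x)))
            rw [← sfun_tfun, sfun_sfun, tfun_tfun]⟩
    rw [hset]
    have d1 := sfun_ne (hA := hA) hA1 x
    have d2 := tfun_ne (hB := hB) hB1 x
    have d3 := sfun_ne_tfun (hA := hA) (hB := hB) htnc x
    have d4 := ne_sfun_tfun (hA := hA) (hB := hB) htnc hA x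
    have d5 : sfun A B hA x ≠ sfun A B hA (tfun A B hB x) := fun h =>
      tfun_ne (hB := hB) hB1 x ((hinj h).symm)
    have d6 : tfun A B hB x ≠ sfun A B hA (tfun A B hB x) :=
      (sfun_ne (hA := hA) hA1 (tfun A B hB x)).symm
    rw [Finset.card_insert_of_notMem (by
        simp only [Finset.mem_insert, Finset.mem_singleton]
        push_neg
        exact ⟨fun h => d1 h.symm, fun h => d2 h.symm, d4⟩),
      Finset.card_insert_of_notMem (by
        simp only [Finset.mem_insert, Finset.mem_singleton]
        push_neg
        exact ⟨d3, d5⟩),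
      Finset.card_insert_of_notMem (by
        simp only [Finset.mem_singleton]
        exact d6),
      Finset.card_singleton]
  have hfib := Finset.card_eq_sum_card_fiberwise
    (f := fun x : G × ↥A × ↥B => Quotient.mk (myrel A B hA hB) x)
    (s := Finset.univ) (t := Finset.univ) (fun x _ => Finset.mem_univ _)
  rw [Fintype.card, hfib, Finset.sum_congr rfl (fun q _ => key q),
    Finset.sum_const, smul_eq_mul, Fintype.card, mul_comm]


section FieldAux

variable {𝔽 : Type*} [Field 𝔽] {G : Type*} [Group G] [Fintype G] [DecidableEq G]

def Wc (𝔽 : Type*) [Field 𝔽] {G : Type*} [Group G] [Fintype G] [DecidableEq G]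
    (A B : Finset G) (hA : ∀ a ∈ A, a⁻¹ ∈ A) (hB : ∀ b ∈ B, b⁻¹ ∈ B) :
    Submodule 𝔽 (G → ↥A → ↥B → 𝔽) where
  carrier := {m | ∀ (g : G) (a : ↥A) (b : ↥B),
      m g a b = m ((a : G) * g) ⟨(a : G)⁻¹, hA _ a.2⟩ b ∧
      m g a b = m (g * (b : G)) a ⟨(b : G)⁻¹, hB _ b.2⟩}
  add_mem' := by
    intro m₁ m₂ h₁ h₂ g a b
    constructor
    · simp only [Pi.add_apply]; rw [(h₁ g a b).1, (h₂ g a b).1]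
    · simp only [Pi.add_apply]; rw [(h₁ g a b).2, (h₂ g a b).2]
  zero_mem' := fun _ _ _ => ⟨rfl, rfl⟩
  smul_mem' := by
    intro c m hm g a b
    constructor
    · simp only [Pi.smul_apply]; rw [(hm g a b).1]
    · simp only [Pi.smul_apply]; rw [(hm g a b).2]

def Jmap (𝔽 : Type*) [Field 𝔽] {G : Type*} [Group G] [Fintype G] [DecidableEq G]
    (A B : Finset G) (hA : ∀ a ∈ A, a⁻¹ ∈ A) (hB : ∀ b ∈ B, b⁻¹ ∈ B) :
    (Quotient (myrel A B hA hB) → 𝔽) →ₗ[𝔽] (G → ↥A → ↥B → 𝔽) where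
  toFun h := fun g a b => h (Quotient.mk (myrel A B hA hB) (g, a, b))
  map_add' := fun _ _ => rfl
  map_smul' := fun _ _ => rfl

lemma Jmap_mem {A B : Finset G} {hA : ∀ a ∈ A, a⁻¹ ∈ A} {hB : ∀ b ∈ B, b⁻¹ ∈ B}
    (h : Quotient (myrel A B hA hB) → 𝔽) :
    Jmap 𝔽 A B hA hB h ∈ Wc 𝔽 A B hA hB := by
  intro g a b
  constructor
  · exact congrArg h (Quotient.sound ⟨true, false, rfl⟩)
  · exact congrArg h (Quotient.sound ⟨false, true, rfl⟩)

lemma Jmap_inj {A B : Finset G} {hA : ∀ a ∈ A, a⁻¹ ∈ A} {hB : ∀ b ∈ B, b⁻¹ ∈ B} :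
    Function.Injective (Jmap 𝔽 A B hA hB) := by
  rw [← LinearMap.ker_eq_bot, LinearMap.ker_eq_bot']
  intro h hh
  funext q
  obtain ⟨⟨g, a, b⟩, rfl⟩ := Quotient.exists_rep q
  exact congrFun (congrFun (congrFun hh g) a) b

def Tmap (𝔽 : Type*) [Field 𝔽] {G : Type*} [Group G] [Fintype G] [DecidableEq G]
    (A B : Finset G) (CA : Submodule 𝔽 (↥A → 𝔽)) (CB : Submodule 𝔽 (↥B → 𝔽)) :
    (G → ↥(FK6.tensorCode CA CB)) →ₗ[𝔽] (G → ↥A → ↥B → 𝔽) where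
  toFun f := fun g => (f g : ↥A → ↥B → 𝔽)
  map_add' := fun _ _ => rfl
  map_smul' := fun _ _ => rfl

end FieldAux

end FK6Aux

/-- lower bound on the dimension (rate) of the `0`-cocycle code of the
double Cayley complex. -/
theorem statement7
    (G : Type) [Group G] [Fintype G] [DecidableEq G]
    (A B : Finset G)
    (hA1 : (1 : G) ∉ A) (hB1 : (1 : G) ∉ B)
    (hAinv : ∀ a ∈ A, a⁻¹ ∈ A) (hBinv : ∀ b ∈ B, b⁻¹ ∈ B)
    (hAgen : Subgroup.closure (A : Set G) = ⊤) (hBgen : Subgroup.closure (B : Set G) = ⊤)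
    (htnc : ∀ (g : G), ∀ a ∈ A, ∀ b ∈ B, g * a * g⁻¹ ≠ b)
    (𝔽 : Type) [Field 𝔽] [Fintype 𝔽]
    (CA : Submodule 𝔽 (↥A → 𝔽)) (CB : Submodule 𝔽 (↥B → 𝔽)) :
    ((A.card : ℝ) * (B.card : ℝ) * (Fintype.card G : ℝ)) *
        (((Module.finrank 𝔽 ↥CA : ℝ) / (A.card : ℝ)) *
            ((Module.finrank 𝔽 ↥CB : ℝ) / (B.card : ℝ)) - 3 / 4) ≤
      (Module.finrank 𝔽 ↥(FK6.Z0 A B CA CB hAinv hBinv) : ℝ) := by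
  classical
  by_cases hA0 : A.card = 0
  · have : ((A.card : ℝ)) = 0 := by rw [hA0]; norm_num
    rw [this]
    simpa using (Nat.cast_nonneg _ : (0:ℝ) ≤ (Module.finrank 𝔽 ↥(FK6.Z0 A B CA CB hAinv hBinv) : ℝ))
  by_cases hB0 : B.card = 0
  · have : ((B.card : ℝ)) = 0 := by rw [hB0]; norm_num
    rw [this]
    simpa using (Nat.cast_nonneg _ : (0:ℝ) ≤ (Module.finrank 𝔽 ↥(FK6.Z0 A B CA CB hAinv hBinv) : ℝ))
  set S := FK6.tensorCode CA CB with hS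
  set T : Submodule 𝔽 (G → ↥A → ↥B → 𝔽) := Submodule.pi Set.univ (fun _ : G => S) with hT
  set W : Submodule 𝔽 (G → ↥A → ↥B → 𝔽) := FK6Aux.Wc 𝔽 A B hAinv hBinv with hW
  have hTW : T ⊓ W ≤ FK6.Z0 A B CA CB hAinv hBinv := by
    rintro m hm
    rw [Submodule.mem_inf] at hm
    exact ⟨fun g => Submodule.mem_pi.mp hm.1 g (Set.mem_univ g), hm.2⟩
  -- finrank of the full space
  have efull : Module.finrank 𝔽 (G → ↥A → ↥B → 𝔽)
      = Fintype.card G * (A.card * B.card) := by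
    have e1 : Module.finrank 𝔽 (↥B → 𝔽) = B.card := by
      rw [Module.finrank_pi, Fintype.card_coe]
    have e2 : Module.finrank 𝔽 (↥A → ↥B → 𝔽) = A.card * B.card := by
      rw [Module.finrank_pi_fintype, Finset.sum_congr rfl (fun _ _ => e1),
        Finset.sum_const, smul_eq_mul, Finset.card_univ, Fintype.card_coe]
    rw [Module.finrank_pi_fintype, Finset.sum_congr rfl (fun _ _ => e2),
      Finset.sum_const, smul_eq_mul, Finset.card_univ]
  -- lower bound on T
  have hTmem : ∀ f : G → ↥S, FK6Aux.Tmap 𝔽 A B CA CB f ∈ T := by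
    intro f
    exact Submodule.mem_pi.mpr (fun g _ => (f g).2)
  have hTinj : Function.Injective ((FK6Aux.Tmap 𝔽 A B CA CB).codRestrict T hTmem) := by
    intro f₁ f₂ h12
    have := congrArg Subtype.val h12
    funext g
    exact Subtype.ext (congrFun this g)
  have hTrank : Fintype.card G * (Module.finrank 𝔽 CA * Module.finrank 𝔽 CB)
      ≤ Module.finrank 𝔽 T := by
    have h1 := LinearMap.finrank_le_finrank_of_injective hTinj
    have h2 : Module.finrank 𝔽 (G → ↥S) = Fintype.card G * Module.finrank 𝔽 S := by
      rw [Module.finrank_pi_fintype, Finset.sum_const, smul_eq_mul, Finset.card_univ]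
    calc Fintype.card G * (Module.finrank 𝔽 CA * Module.finrank 𝔽 CB)
        ≤ Fintype.card G * Module.finrank 𝔽 S :=
          Nat.mul_le_mul_left _ (FK6.finrank_tensorCode_ge CA CB)
      _ = Module.finrank 𝔽 (G → ↥S) := h2.symm
      _ ≤ Module.finrank 𝔽 T := h1
  -- lower bound on W
  have hWrank : Fintype.card (Quotient (FK6Aux.myrel A B hAinv hBinv))
      ≤ Module.finrank 𝔽 W := by
    have hinj : Function.Injective
        ((FK6Aux.Jmap 𝔽 A B hAinv hBinv).codRestrict W (fun h => FK6Aux.Jmap_mem h)) := by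
      intro h₁ h₂ h12
      exact FK6Aux.Jmap_inj (congrArg Subtype.val h12)
    have := LinearMap.finrank_le_finrank_of_injective hinj
    rwa [Module.finrank_pi] at this
  have hcard : Fintype.card G * (A.card * B.card)
      = 4 * Fintype.card (Quotient (FK6Aux.myrel A B hAinv hBinv)) := by
    have := FK6Aux.card_eq (hA := hAinv) (hB := hBinv) hA1 hB1 htnc
    rwa [Fintype.card_prod, Fintype.card_prod, Fintype.card_coe, Fintype.card_coe] at this
  have hsum := Submodule.finrank_sup_add_finrank_inf_eq T W
  have hsup : Module.finrank 𝔽 ↥(T ⊔ W) ≤ Fintype.card G * (A.card * B.card) :=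
    (Submodule.finrank_le _).trans_eq efull
  have hZ : Module.finrank 𝔽 ↥(T ⊓ W) ≤ Module.finrank 𝔽 ↥(FK6.Z0 A B CA CB hAinv hBinv) :=
    Submodule.finrank_mono hTW
  -- real arithmetic
  have hnA : (0:ℝ) < (A.card : ℝ) := by exact_mod_cast Nat.pos_of_ne_zero hA0
  have hnB : (0:ℝ) < (B.card : ℝ) := by exact_mod_cast Nat.pos_of_ne_zero hB0
  have r1 : (Module.finrank 𝔽 ↥(T ⊔ W) : ℝ) + (Module.finrank 𝔽 ↥(T ⊓ W) : ℝ)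
      = (Module.finrank 𝔽 ↥T : ℝ) + (Module.finrank 𝔽 ↥W : ℝ) := by exact_mod_cast hsum
  have r2 : (Module.finrank 𝔽 ↥(T ⊔ W) : ℝ)
      ≤ (Fintype.card G : ℝ) * ((A.card : ℝ) * (B.card : ℝ)) := by exact_mod_cast hsup
  have r3 : (Fintype.card G : ℝ) * ((Module.finrank 𝔽 ↥CA : ℝ) * (Module.finrank 𝔽 ↥CB : ℝ))
      ≤ (Module.finrank 𝔽 ↥T : ℝ) := by exact_mod_cast hTrank
  have r4 : ((Fintype.card (Quotient (FK6Aux.myrel A B hAinv hBinv)) : ℝ))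
      ≤ (Module.finrank 𝔽 ↥W : ℝ) := by exact_mod_cast hWrank
  have r5 : (Fintype.card G : ℝ) * ((A.card : ℝ) * (B.card : ℝ))
      = 4 * ((Fintype.card (Quotient (FK6Aux.myrel A B hAinv hBinv)) : ℝ)) := by
    exact_mod_cast hcard
  have r6 : (Module.finrank 𝔽 ↥(T ⊓ W) : ℝ)
      ≤ (Module.finrank 𝔽 ↥(FK6.Z0 A B CA CB hAinv hBinv) : ℝ) := by exact_mod_cast hZ
  rw [mul_sub]
  have e1 : ((A.card : ℝ) * (B.card : ℝ) * (Fintype.card G : ℝ)) *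
      (((Module.finrank 𝔽 ↥CA : ℝ) / (A.card : ℝ)) *
        ((Module.finrank 𝔽 ↥CB : ℝ) / (B.card : ℝ)))
      = (Fintype.card G : ℝ) * ((Module.finrank 𝔽 ↥CA : ℝ) * (Module.finrank 𝔽 ↥CB : ℝ)) := by
    field_simp
  rw [e1]
  linarith
end
end

section
/- With the lifted-code setup, let G be a finite graph (multiple edges allowed, no loops) with a labelling ℓ : G(0)∪G(1) → 𝒫([n]) such that ℓ restricts to a bijection G(0) → S and ℓ(e) ⊆ ℓ(v) for every edge e and every endpoint v of e. Suppose every vertex of G belongs to at least d_min ≥ 1 and at most d_max edges. If the 2-query tester T_{G,ℓ} for L has soundness μ ≥ 0, i.e., #{e ∈ G(1) with endpoints u,v : f_{ℓ(u)}|_{ℓ(e)} ≠ f_{ℓ(v)}|_{ℓ(e)}}/|G(1)| ≥ μ·dist(f, L) for every f ∈ ∏_{s∈S} C_s, then the natural tester of C has soundness (k_min·D_min/(k_max·D_max))·(μ/(μ + 2·d_max·d_min^{−1})), i.e., #{s ∈ S : g|_s ∉ C_s}/|S| ≥ (k_min·D_min/(k_max·D_max))·(μ/(μ + 2·d_max/d_min))·dist(g,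 C) for every g ∈ Σ^n. -/
open scoped Classical

noncomputable section

namespace LC

variable {n : ℕ} {Sig : Type*}

/-- Restriction of a word to a subset of coordinates. -/
def restrict (g : Fin n → Sig) (s : Finset (Fin n)) : ↥s → Sig := fun i => g i.1

/-- The lifted code determined by the family of small codes `Cs`. -/
def liftedCode (S : Finset (Finset (Fin n))) (Cs : ∀ s : Finset (Fin n), Set (↥s → Sig)) :
    Set (Fin n → Sig) :=
  {g | ∀ s ∈ S, restrict g s ∈ Cs s}

/-- Ensembles of local words, indexed by the members of `S`. -/
abbrev Ensemble (S : Finset (Finset (Fin n))) (Sig : Type*) : Type _ :=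
  ∀ s : {s : Finset (Fin n) // s ∈ S}, (↥s.1 → Sig)

/-- The line code of the lifted code `C({Cs})`. -/
def lineCode (S : Finset (Finset (Fin n))) (Cs : ∀ s : Finset (Fin n), Set (↥s → Sig)) :
    Set (Ensemble S Sig) :=
  {f | (∀ s, f s ∈ Cs s.1) ∧
    ∀ (s s' : {s : Finset (Fin n) // s ∈ S}) (i : Fin n) (hi : i ∈ s.1) (hi' : i ∈ s'.1),
      f s ⟨i, hi⟩ = f s' ⟨i, hi'⟩}

/-- Normalized Hamming distance on `Sig^n`. -/
def hdist (g g' : Fin n → Sig) : ℝ :=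
  ((Finset.univ.filter fun i => g i ≠ g' i).card : ℝ) / (n : ℝ)

/-- Normalized Hamming distance on ensembles. -/
def edist {S : Finset (Finset (Fin n))} (f f' : Ensemble S Sig) : ℝ :=
  ((Finset.univ.filter fun s : {s : Finset (Fin n) // s ∈ S} => f s ≠ f' s).card : ℝ) /
    (S.card : ℝ)

/-- Distance from a word to a code. -/
def hdistToCode (g : Fin n → Sig) (C : Set (Fin n → Sig)) : ℝ :=
  sInf (hdist g '' C)

/-- Distance from an ensemble to a code of ensembles. -/
def edistToCode {S : Finset (Finset (Fin n))} (f : Ensemble S Sig) (L : Set (Ensemble S Sig)) :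
    ℝ :=
  sInf (edist f '' L)

/-- The relative distance of a code: the maximum of the normalized Hamming distance over
distinct pairs of codewords (`0` for a singleton code). -/
def codeDelta {α : Type*} [Fintype α] (C : Set (α → Sig)) : ℝ :=
  sSup {r : ℝ | ∃ u ∈ C, ∃ v ∈ C, u ≠ v ∧
    r = ((Finset.univ.filter fun i => u i ≠ v i).card : ℝ) / (Fintype.card α : ℝ)}

/-- The relative distance of a code of ensembles. -/
def lineDelta {S : Finset (Finset (Fin n))} (L : Set (Ensemble S Sig)) : ℝ :=
  sSup {r : ℝ | ∃ f ∈ L, ∃ f' ∈ L, f ≠ f' ∧ r = edist f f'}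

/-- The members of `S` on which `g` violates the corresponding small code. -/
def natViolations (S : Finset (Finset (Fin n))) (Cs : ∀ s : Finset (Fin n), Set (↥s → Sig))
    (g : Fin n → Sig) : Finset (Finset (Fin n)) :=
  S.filter fun s => restrict g s ∉ Cs s

/-- The edges of the intersection graph of `S`, as two-element sets. -/
def interEdges (S : Finset (Finset (Fin n))) : Finset (Finset (Finset (Fin n))) :=
  Finset.univ.filter fun E' =>
    ∃ s ∈ S, ∃ s' ∈ S, s ≠ s' ∧ (s ∩ s').Nonempty ∧ E' = {s, s'}

/-- The edges of the intersection graph of `S` on which the ensemble `f` disagrees. -/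
def interViolated (S : Finset (Finset (Fin n)))
    (f : Ensemble S Sig) : Finset (Finset (Finset (Fin n))) :=
  Finset.univ.filter fun E' =>
    ∃ (s : Finset (Fin n)) (hs : s ∈ S) (s' : Finset (Fin n)) (hs' : s' ∈ S),
      s ≠ s' ∧ (s ∩ s').Nonempty ∧ E' = {s, s'} ∧
      (fun i : ↥(s ∩ s') => f ⟨s, hs⟩ ⟨i.1, Finset.mem_of_mem_inter_left i.2⟩) ≠
        fun i : ↥(s ∩ s') => f ⟨s', hs'⟩ ⟨i.1, Finset.mem_of_mem_inter_right i.2⟩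

end LC

set_option maxHeartbeats 4000000 in
/-- 2-query testability of the line code implies testability of the lifted
code with its natural tester. -/
theorem statement13 (n : ℕ) (hn : 1 ≤ n) (Sig : Type)
    (S : Finset (Finset (Fin n))) (hS : S.Nonempty)
    (hne : ∀ s ∈ S, s.Nonempty)
    (hcover : ∀ i : Fin n, ∃ s ∈ S, i ∈ s)
    (Cs : ∀ s : Finset (Fin n), Set (↥s → Sig))
    (hCs : ∀ s ∈ S, (Cs s).Nonempty)
    (hCne : (LC.liftedCode S Cs).Nonempty)
    (kmin kmax Dmin Dmax : ℕ)
    (hkmin : (∀ s ∈ S, kmin ≤ s.card) ∧ ∃ s ∈ S, s.card = kmin)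
    (hkmax : (∀ s ∈ S, s.card ≤ kmax) ∧ ∃ s ∈ S, s.card = kmax)
    (hDmin : (∀ i : Fin n, Dmin ≤ (S.filter fun s => i ∈ s).card) ∧
      ∃ i : Fin n, (S.filter fun s => i ∈ s).card = Dmin)
    (hDmax : (∀ i : Fin n, (S.filter fun s => i ∈ s).card ≤ Dmax) ∧
      ∃ i : Fin n, (S.filter fun s => i ∈ s).card = Dmax)
    -- the labelled graph (G, ℓ)
    (V₀ : Type) [Fintype V₀] (E : Type) [Fintype E]
    (ep : E → V₀ × V₀) (hloop : ∀ e : E, (ep e).1 ≠ (ep e).2)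
    (ℓv : V₀ ≃ {s : Finset (Fin n) // s ∈ S})
    (ℓe : E → Finset (Fin n))
    (hs1 : ∀ e : E, ℓe e ⊆ (ℓv (ep e).1).1)
    (hs2 : ∀ e : E, ℓe e ⊆ (ℓv (ep e).2).1)
    (dmin dmax : ℕ) (hdmin1 : 1 ≤ dmin)
    (hdeg : ∀ v : V₀,
      dmin ≤ (Finset.univ.filter fun e : E => (ep e).1 = v ∨ (ep e).2 = v).card ∧
        (Finset.univ.filter fun e : E => (ep e).1 = v ∨ (ep e).2 = v).card ≤ dmax)
    (μ : ℝ) (hμ : 0 ≤ μ)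
    -- soundness of the 2-query tester T_{G,ℓ} of the line code L
    (hsound : ∀ f : LC.Ensemble S Sig, (∀ s, f s ∈ Cs s.1) →
      μ * LC.edistToCode f (LC.lineCode S Cs) ≤
        ((Finset.univ.filter fun e : E =>
            (fun i : ↥(ℓe e) => f (ℓv (ep e).1) ⟨i.1, hs1 e i.2⟩) ≠
              fun i : ↥(ℓe e) => f (ℓv (ep e).2) ⟨i.1, hs2 e i.2⟩).card : ℝ) /
          (Fintype.card E : ℝ)) :
    -- soundness of the natural tester of the lifted code C
    ∀ g : Fin n → Sig,
      (kmin : ℝ) * (Dmin : ℝ) / ((kmax : ℝ) * (Dmax : ℝ)) *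
            (μ / (μ + 2 * (dmax : ℝ) / (dmin : ℝ))) *
          LC.hdistToCode g (LC.liftedCode S Cs) ≤
        ((LC.natViolations S Cs g).card : ℝ) / (S.card : ℝ) := by
  classical
  intro g
  -- trivial case μ = 0
  rcases eq_or_lt_of_le hμ with hμ0 | hμpos
  · rw [← hμ0]
    simp only [zero_div, mul_zero, zero_mul]
    positivity
  -- basic cardinality positivity
  have hNS0 : 0 < S.card := hS.card_pos
  have hn0 : 0 < n := hn
  have hcV : Fintype.card V₀ = S.card := by
    rw [Fintype.card_congr ℓv]
    exact Fintype.card_coe S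
  -- the test ensemble f₁
  obtain ⟨f₁, hf₁, hf₁eq⟩ :
      ∃ f₁ : LC.Ensemble S Sig, (∀ s : {s : Finset (Fin n) // s ∈ S}, f₁ s ∈ Cs s.1) ∧
        ∀ s : {s : Finset (Fin n) // s ∈ S},
          LC.restrict g s.1 ∈ Cs s.1 → f₁ s = LC.restrict g s.1 := by
    refine ⟨fun s => if hc : LC.restrict g s.1 ∈ Cs s.1 then LC.restrict g s.1
      else (hCs s.1 s.2).some, fun s => ?_, fun s hc => dif_pos hc⟩
    by_cases hc : LC.restrict g s.1 ∈ Cs s.1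
    · simpa [dif_pos hc] using hc
    · simpa [dif_neg hc] using (hCs s.1 s.2).some_mem
  -- the line code is nonempty
  obtain ⟨g₀, hg₀⟩ := hCne
  have hLne : (LC.lineCode S Cs).Nonempty :=
    ⟨fun s => LC.restrict g₀ s.1, fun s => hg₀ s.1 s.2, fun s s' i hi hi' => rfl⟩
  obtain ⟨f₀, hf₀⟩ := hLne
  -- the nearest line codeword hst
  have hPex : ∃ k : ℕ, ∃ h ∈ LC.lineCode S Cs,
      (Finset.univ.filter fun s : {s : Finset (Fin n) // s ∈ S} => f₁ s ≠ h s).card = k :=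
    ⟨_, f₀, hf₀, rfl⟩
  set k₀ := Nat.find hPex with hk₀def
  obtain ⟨hst, hstL, hstcard⟩ := Nat.find_spec hPex
  have hk₀min : ∀ h' ∈ LC.lineCode S Cs, k₀ ≤ (Finset.univ.filter
      fun s : {s : Finset (Fin n) // s ∈ S} => f₁ s ≠ h' s).card :=
    fun h' hh' => Nat.find_min' hPex ⟨h', hh', rfl⟩
  -- value of the distance to the line code
  have hedist : LC.edistToCode f₁ (LC.lineCode S Cs) = (k₀ : ℝ) / (S.card : ℝ) := by
    have hbdd : BddBelow (LC.edist f₁ '' LC.lineCode S Cs) := by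
      refine ⟨0, ?_⟩
      rintro r ⟨x, -, rfl⟩
      exact div_nonneg (Nat.cast_nonneg _) (Nat.cast_nonneg _)
    refine le_antisymm (csInf_le hbdd ⟨hst, hstL, ?_⟩) ?_
    · rw [LC.edist, hstcard]
    · refine le_csInf ⟨_, ⟨hst, hstL, rfl⟩⟩ ?_
      rintro r ⟨x, hxL, rfl⟩
      rw [LC.edist]
      have hNSR : (0:ℝ) < S.card := by exact_mod_cast hNS0
      exact (div_le_div_iff_of_pos_right hNSR).2 (by exact_mod_cast hk₀min x hxL)
  -- the corrected word Gg
  obtain ⟨Gg, hGs⟩ : ∃ Gg : Fin n → Sig, ∀ (s) (hsS : s ∈ S),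
      LC.restrict Gg s = hst ⟨s, hsS⟩ := by
    refine ⟨fun i => hst ⟨(hcover i).choose, (hcover i).choose_spec.1⟩
      ⟨i, (hcover i).choose_spec.2⟩, fun s hsS => funext fun i => ?_⟩
    exact hstL.2 _ ⟨s, hsS⟩ i.1 (hcover i.1).choose_spec.2 i.2
  have hGC : Gg ∈ LC.liftedCode S Cs := by
    intro s hsS
    rw [hGs s hsS]
    exact hstL.1 ⟨s, hsS⟩
  -- distance of g to the lifted code
  have hdistle : LC.hdistToCode g (LC.liftedCode S Cs) ≤
      ((Finset.univ.filter fun i => g i ≠ Gg i).card : ℝ) / n := by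
    have hbdd : BddBelow (LC.hdist g '' LC.liftedCode S Cs) := by
      refine ⟨0, ?_⟩
      rintro r ⟨u, -, rfl⟩
      exact div_nonneg (Nat.cast_nonneg _) (Nat.cast_nonneg _)
    exact csInf_le hbdd ⟨Gg, hGC, rfl⟩
  have hdist0 : 0 ≤ LC.hdistToCode g (LC.liftedCode S Cs) := by
    refine Real.sInf_nonneg ?_
    rintro r ⟨u, -, rfl⟩
    exact div_nonneg (Nat.cast_nonneg _) (Nat.cast_nonneg _)
  -- MAIN COUNTING (natural numbers)
  -- disagreements between g and Gg on sets of S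
  have hNa : (Finset.univ.filter fun i : Fin n => g i ≠ Gg i).card * Dmin ≤
      ((Finset.univ.filter fun s : {s : Finset (Fin n) // s ∈ S} => f₁ s ≠ hst s).card +
        (LC.natViolations S Cs g).card) * kmax := by
    have hWsub : (S.filter fun s => LC.restrict g s ≠ LC.restrict Gg s) ⊆
        ((Finset.univ.filter fun s : {s : Finset (Fin n) // s ∈ S} =>
          f₁ s ≠ hst s).image Subtype.val) ∪ LC.natViolations S Cs g := by
      intro s hsW
      obtain ⟨hsS, hnes⟩ := Finset.mem_filter.1 hsW
      rw [hGs s hsS] at hnes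
      by_cases hc : LC.restrict g s ∈ Cs s
      · refine Finset.mem_union_left _ (Finset.mem_image.2 ⟨⟨s, hsS⟩, ?_, rfl⟩)
        refine Finset.mem_filter.2 ⟨Finset.mem_univ _, ?_⟩
        rw [hf₁eq ⟨s, hsS⟩ hc]
        exact hnes
      · refine Finset.mem_union_right _ ?_
        simp only [LC.natViolations, Finset.mem_filter]
        exact ⟨hsS, hc⟩
    have hc5 : (S.filter fun s => LC.restrict g s ≠ LC.restrict Gg s).card ≤
        (Finset.univ.filter fun s : {s : Finset (Fin n) // s ∈ S} => f₁ s ≠ hst s).card +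
          (LC.natViolations S Cs g).card :=
      (Finset.card_le_card hWsub).trans ((Finset.card_union_le _ _).trans
        (Nat.add_le_add_right Finset.card_image_le _))
    calc (Finset.univ.filter fun i : Fin n => g i ≠ Gg i).card * Dmin
        ≤ ∑ i ∈ (Finset.univ.filter fun i : Fin n => g i ≠ Gg i),
            (S.filter fun s => i ∈ s).card := by
          have := Finset.sum_le_sum
            (fun i (_ : i ∈ Finset.univ.filter fun i : Fin n => g i ≠ Gg i) => hDmin.1 i)
          simpa [Finset.sum_const, smul_eq_mul] using this
      _ = ∑ s ∈ S, ((Finset.univ.filter fun i : Fin n => g i ≠ Gg i).filter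
            fun i => i ∈ s).card := by
          simp_rw [Finset.card_filter]
          exact Finset.sum_comm
      _ = ∑ s ∈ (S.filter fun s => LC.restrict g s ≠ LC.restrict Gg s),
            ((Finset.univ.filter fun i : Fin n => g i ≠ Gg i).filter fun i => i ∈ s).card := by
          refine (Finset.sum_subset (Finset.filter_subset _ _) ?_).symm
          intro s hsS hsW
          rw [Finset.card_eq_zero, Finset.filter_eq_empty_iff]
          intro i hi his
          have heq : LC.restrict g s = LC.restrict Gg s := by
            by_contra hcon
            exact hsW (Finset.mem_filter.2 ⟨hsS, hcon⟩)
          exact (Finset.mem_filter.1 hi).2 (congrFun heq ⟨i, his⟩)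
      _ ≤ ∑ s ∈ (S.filter fun s => LC.restrict g s ≠ LC.restrict Gg s), kmax :=
          Finset.sum_le_sum fun s hsW =>
            le_trans (Finset.card_le_card fun i hi => (Finset.mem_filter.1 hi).2)
              (hkmax.1 s (Finset.filter_subset _ _ hsW))
      _ = (S.filter fun s => LC.restrict g s ≠ LC.restrict Gg s).card * kmax := by
          rw [Finset.sum_const, smul_eq_mul]
      _ ≤ _ := Nat.mul_le_mul_right _ hc5
  -- |S| * kmin ≤ n * Dmax
  have h5nat : S.card * kmin ≤ n * Dmax := by
    have h1 : S.card * kmin ≤ ∑ s ∈ S, s.card := by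
      have := Finset.sum_le_sum (fun s hsS => hkmin.1 s hsS)
      simpa [Finset.sum_const, smul_eq_mul] using this
    have h2 : ∑ s ∈ S, s.card = ∑ i : Fin n, (S.filter fun s => i ∈ s).card := by
      have hstep : ∑ s ∈ S, s.card
          = ∑ s ∈ S, (Finset.univ.filter fun i : Fin n => i ∈ s).card :=
        Finset.sum_congr rfl fun s _ => by rw [Finset.filter_univ_mem]
      rw [hstep]
      simp_rw [Finset.card_filter]
      exact Finset.sum_comm
    have h3 : ∑ i : Fin n, (S.filter fun s => i ∈ s).card ≤ n * Dmax := by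
      have := Finset.sum_le_sum (fun i (_ : i ∈ (Finset.univ : Finset (Fin n))) => hDmax.1 i)
      simpa [Finset.sum_const, smul_eq_mul, Finset.card_univ] using this
    exact h1.trans (h2 ▸ h3)
  -- handshake: dmin * |S| ≤ 2 * |E|
  have hhs : ∑ v : V₀, (Finset.univ.filter fun e : E =>
      (ep e).1 = v ∨ (ep e).2 = v).card = 2 * Fintype.card E := by
    simp_rw [Finset.card_filter]
    rw [Finset.sum_comm]
    have hinner : ∀ e : E,
        (∑ v : V₀, if (ep e).1 = v ∨ (ep e).2 = v then 1 else 0) = 2 := by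
      intro e
      rw [← Finset.card_filter]
      have hset : (Finset.univ.filter fun v : V₀ => (ep e).1 = v ∨ (ep e).2 = v)
          = {(ep e).1, (ep e).2} := by
        ext v
        simp [eq_comm]
      rw [hset, Finset.card_pair (hloop e)]
    rw [Finset.sum_congr rfl fun e _ => hinner e]
    simp [Finset.sum_const, Finset.card_univ, mul_comm]
  have h3nat : dmin * S.card ≤ 2 * Fintype.card E := by
    calc dmin * S.card = ∑ _v : V₀, dmin := by
          rw [Finset.sum_const, smul_eq_mul, Finset.card_univ, hcV, mul_comm]
      _ ≤ ∑ v : V₀, (Finset.univ.filter fun e : E =>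
            (ep e).1 = v ∨ (ep e).2 = v).card := Finset.sum_le_sum fun v _ => (hdeg v).1
      _ = 2 * Fintype.card E := hhs
  -- violated edges bounded by violated vertices
  have hEvcard : (Finset.univ.filter fun e : E =>
      (fun i : ↥(ℓe e) => f₁ (ℓv (ep e).1) ⟨i.1, hs1 e i.2⟩) ≠
        fun i : ↥(ℓe e) => f₁ (ℓv (ep e).2) ⟨i.1, hs2 e i.2⟩).card ≤
      (Finset.univ.filter fun v : V₀ =>
        LC.restrict g (ℓv v).1 ∉ Cs (ℓv v).1).card * dmax := by
    have hsub : (Finset.univ.filter fun e : E =>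
        (fun i : ↥(ℓe e) => f₁ (ℓv (ep e).1) ⟨i.1, hs1 e i.2⟩) ≠
          fun i : ↥(ℓe e) => f₁ (ℓv (ep e).2) ⟨i.1, hs2 e i.2⟩) ⊆
        (Finset.univ.filter fun v : V₀ =>
          LC.restrict g (ℓv v).1 ∉ Cs (ℓv v).1).biUnion
          fun v => Finset.univ.filter fun e : E => (ep e).1 = v ∨ (ep e).2 = v := by
      intro e he
      have hef := (Finset.mem_filter.1 he).2
      by_contra hnot
      rw [Finset.mem_biUnion] at hnot
      push_neg at hnot
      have h1 : LC.restrict g (ℓv (ep e).1).1 ∈ Cs (ℓv (ep e).1).1 := by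
        by_contra hc
        exact hnot (ep e).1 (Finset.mem_filter.2 ⟨Finset.mem_univ _, hc⟩)
          (Finset.mem_filter.2 ⟨Finset.mem_univ _, Or.inl rfl⟩)
      have h2 : LC.restrict g (ℓv (ep e).2).1 ∈ Cs (ℓv (ep e).2).1 := by
        by_contra hc
        exact hnot (ep e).2 (Finset.mem_filter.2 ⟨Finset.mem_univ _, hc⟩)
          (Finset.mem_filter.2 ⟨Finset.mem_univ _, Or.inr rfl⟩)
      apply hef
      funext i
      simp only [hf₁eq _ h1, hf₁eq _ h2]
      rfl
    refine (Finset.card_le_card hsub).trans (Finset.card_biUnion_le.trans ?_)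
    calc ∑ v ∈ (Finset.univ.filter fun v : V₀ =>
          LC.restrict g (ℓv v).1 ∉ Cs (ℓv v).1),
          (Finset.univ.filter fun e : E => (ep e).1 = v ∨ (ep e).2 = v).card
        ≤ ∑ _v ∈ (Finset.univ.filter fun v : V₀ =>
            LC.restrict g (ℓv v).1 ∉ Cs (ℓv v).1), dmax :=
          Finset.sum_le_sum fun v _ => (hdeg v).2
      _ = _ := by rw [Finset.sum_const, smul_eq_mul]
  -- violated vertices = violated sets
  have hVVcard : (Finset.univ.filter fun v : V₀ =>
      LC.restrict g (ℓv v).1 ∉ Cs (ℓv v).1).card = (LC.natViolations S Cs g).card := by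
    apply Finset.card_bij (fun v _ => (ℓv v).1)
    · intro v hv
      simp only [LC.natViolations, Finset.mem_filter]
      exact ⟨(ℓv v).2, (Finset.mem_filter.1 hv).2⟩
    · intro v hv v' hv' heq
      exact ℓv.injective (Subtype.ext heq)
    · intro s hsV
      simp only [LC.natViolations, Finset.mem_filter] at hsV
      refine ⟨ℓv.symm ⟨s, hsV.1⟩, ?_, ?_⟩
      · refine Finset.mem_filter.2 ⟨Finset.mem_univ _, ?_⟩
        rw [Equiv.apply_symm_apply]
        exact hsV.2
      · rw [Equiv.apply_symm_apply]
  -- abbreviations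
  set aN := (Finset.univ.filter fun i : Fin n => g i ≠ Gg i).card with haN
  set vN := (LC.natViolations S Cs g).card with hvN
  set evN := (Finset.univ.filter fun e : E =>
      (fun i : ↥(ℓe e) => f₁ (ℓv (ep e).1) ⟨i.1, hs1 e i.2⟩) ≠
        fun i : ↥(ℓe e) => f₁ (ℓv (ep e).2) ⟨i.1, hs2 e i.2⟩).card with hevN
  set vvN := (Finset.univ.filter fun v : V₀ =>
      LC.restrict g (ℓv v).1 ∉ Cs (ℓv v).1).card with hvvN
  set dR := LC.hdistToCode g (LC.liftedCode S Cs) with hdR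
  -- soundness of the line tester applied to f₁
  have hEv := hsound f₁ hf₁
  rw [hedist] at hEv
  -- pass to the reals
  have hNSR : (0:ℝ) < S.card := by exact_mod_cast hNS0
  have hnR : (0:ℝ) < n := by exact_mod_cast hn0
  have hNE0 : 0 < Fintype.card E := by
    have h1 : 1 * 1 ≤ dmin * S.card := Nat.mul_le_mul hdmin1 hNS0
    omega
  have hNER : (0:ℝ) < Fintype.card E := by exact_mod_cast hNE0
  have hdminR : (1:ℝ) ≤ dmin := by exact_mod_cast hdmin1
  have hdmax1 : 1 ≤ dmax := by
    have hv0 : Nonempty V₀ := by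
      rw [← Fintype.card_pos_iff, hcV]
      exact hNS0
    obtain ⟨v⟩ := hv0
    exact le_trans hdmin1 ((hdeg v).1.trans (hdeg v).2)
  have hdmaxR : (1:ℝ) ≤ dmax := by exact_mod_cast hdmax1
  have hkmin1 : 1 ≤ kmin := by
    obtain ⟨s, hsS, hsc⟩ := hkmin.2
    rw [← hsc]
    exact Finset.card_pos.2 (hne s hsS)
  have hkmax1 : 1 ≤ kmax := by
    obtain ⟨s, hsS⟩ := hS
    exact le_trans (hkmin1.trans (hkmin.1 s hsS)) (hkmax.1 s hsS)
  have hDmin1 : 1 ≤ Dmin := by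
    obtain ⟨i, hic⟩ := hDmin.2
    rw [← hic]
    refine Finset.card_pos.2 ?_
    obtain ⟨s, hsS, his⟩ := hcover i
    exact ⟨s, Finset.mem_filter.2 ⟨hsS, his⟩⟩
  have hDmax1 : 1 ≤ Dmax := by
    have i : Fin n := ⟨0, hn0⟩
    exact le_trans (hDmin1.trans (hDmin.1 i)) (hDmax.1 i)
  have hkminR : (1:ℝ) ≤ kmin := by exact_mod_cast hkmin1
  have hkmaxR : (1:ℝ) ≤ kmax := by exact_mod_cast hkmax1
  have hDminR : (1:ℝ) ≤ Dmin := by exact_mod_cast hDmin1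
  have hDmaxR : (1:ℝ) ≤ Dmax := by exact_mod_cast hDmax1
  -- real versions of the counting results
  have r2 : (evN : ℝ) ≤ (vN : ℝ) * dmax := by
    have h := hEvcard
    rw [hVVcard] at h
    exact_mod_cast h
  have r3 : (dmin : ℝ) * S.card ≤ 2 * Fintype.card E := by exact_mod_cast h3nat
  have r4 : (aN : ℝ) * Dmin ≤ ((k₀ : ℝ) + (vN : ℝ)) * kmax := by
    rw [hstcard] at hNa
    exact_mod_cast hNa
  have r5 : (S.card : ℝ) * kmin ≤ (n : ℝ) * Dmax := by exact_mod_cast h5nat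
  -- cross-multiplied soundness
  have e1 : μ * (k₀ : ℝ) * Fintype.card E ≤ (evN : ℝ) * S.card := by
    rw [← mul_div_assoc] at hEv
    exact (div_le_div_iff₀ hNSR hNER).1 hEv
  -- step A : μ * dmin * k₀ ≤ 2 * dmax * violations
  have hk₀0 : (0:ℝ) ≤ (k₀ : ℝ) := Nat.cast_nonneg _
  have stepA : μ * (dmin : ℝ) * (k₀ : ℝ) ≤ 2 * (dmax : ℝ) * (vN : ℝ) := by
    have e3 : (μ * (dmin : ℝ) * (k₀ : ℝ)) * S.card ≤
        (2 * (dmax : ℝ) * (vN : ℝ)) * S.card := by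
      nlinarith [mul_le_mul_of_nonneg_left r3 (by positivity : (0:ℝ) ≤ μ * (k₀ : ℝ)),
        e1, mul_le_mul_of_nonneg_right r2 (by positivity : (0:ℝ) ≤ 2 * (S.card : ℝ))]
    exact le_of_mul_le_mul_right e3 hNSR
  -- step B : dist * |S| * kmin ≤ bad * Dmax
  have b1 : dR * n ≤ (aN : ℝ) := (le_div_iff₀ hnR).1 hdistle
  have stepB : dR * S.card * kmin ≤ (aN : ℝ) * Dmax := by
    nlinarith [mul_le_mul_of_nonneg_left r5 hdist0,
      mul_le_mul_of_nonneg_right b1 (by positivity : (0:ℝ) ≤ (Dmax : ℝ))]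
  -- key inequality
  have key : (kmin : ℝ) * Dmin * μ * dmin * (dR * S.card) ≤
      (kmax : ℝ) * Dmax * (μ * dmin + 2 * dmax) * (vN : ℝ) := by
    nlinarith [mul_le_mul_of_nonneg_right stepB
        (by positivity : (0:ℝ) ≤ (Dmin : ℝ) * μ * dmin),
      mul_le_mul_of_nonneg_right r4 (by positivity : (0:ℝ) ≤ (Dmax : ℝ) * μ * dmin),
      mul_le_mul_of_nonneg_left stepA (by positivity : (0:ℝ) ≤ (kmax : ℝ) * Dmax)]
  -- finish
  have hdminpos : (0:ℝ) < (dmin : ℝ) := by linarith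
  have hLHSeq : (kmin : ℝ) * Dmin / ((kmax : ℝ) * Dmax) * (μ / (μ + 2 * (dmax : ℝ) / dmin)) *
      dR = ((kmin : ℝ) * Dmin * μ * dmin * dR) /
        ((kmax : ℝ) * Dmax * (μ * dmin + 2 * dmax)) := by
    rw [div_mul_div_comm, div_mul_eq_mul_div]
    rw [div_eq_div_iff (by positivity) (by positivity)]
    field_simp
  rw [hLHSeq, div_le_div_iff₀ (by positivity) hNSR]
  nlinarith [key]
end
end

section
/- With the lifted-code setup, let (G,ℓ) be the intersection graph of S: the simple graph with vertex set S, with an edge {s,s′} whenever s ≠ s′ and s∩s′ ≠ ∅, labelled by ℓ(s) = s and ℓ({s,s′}) = s∩s′; let d_max and d_min ≥ 1 be the maximal and minimal vertex degrees of G. If the natural tester of C has soundness μ ≥ 0, i.e., #{s ∈ S : g|_s ∉ C_s}/|S| ≥ μ·dist(g, C) for every g ∈ Σ^n, then the 2-query tester T_{G,ℓ} for L has soundness D_min·k_min·μ/(d_max·D_max²·k_max²·(μ + D_min^{−1}·D_max·k_max)), i.e., for every f ∈ ∏_{s∈S} C_s, #{{s,s′} ∈ G(1) : f_s|_{s∩s′}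 ≠ f_{s′}|_{s∩s′}}/|G(1)| ≥ (D_min·k_min·μ/(d_max·D_max²·k_max²·(μ + D_min^{−1}·D_max·k_max)))·dist(f, L). -/
open scoped Classical

noncomputable section

set_option maxHeartbeats 2000000 in
/-- testability of the lifted code with its natural tester implies 2-query
testability of the line code w.r.t. the intersection graph of `S`. -/
theorem statement14 (n : ℕ) (hn : 1 ≤ n) (Sig : Type)
    (S : Finset (Finset (Fin n))) (hS : S.Nonempty)
    (hne : ∀ s ∈ S, s.Nonempty)
    (hcover : ∀ i : Fin n, ∃ s ∈ S, i ∈ s)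
    (Cs : ∀ s : Finset (Fin n), Set (↥s → Sig))
    (hCs : ∀ s ∈ S, (Cs s).Nonempty)
    (hCne : (LC.liftedCode S Cs).Nonempty)
    (kmin kmax Dmin Dmax : ℕ)
    (hkmin : (∀ s ∈ S, kmin ≤ s.card) ∧ ∃ s ∈ S, s.card = kmin)
    (hkmax : (∀ s ∈ S, s.card ≤ kmax) ∧ ∃ s ∈ S, s.card = kmax)
    (hDmin : (∀ i : Fin n, Dmin ≤ (S.filter fun s => i ∈ s).card) ∧
      ∃ i : Fin n, (S.filter fun s => i ∈ s).card = Dmin)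
    (hDmax : (∀ i : Fin n, (S.filter fun s => i ∈ s).card ≤ Dmax) ∧
      ∃ i : Fin n, (S.filter fun s => i ∈ s).card = Dmax)
    -- degrees of the intersection graph of S
    (dmin dmax : ℕ) (hdmin1 : 1 ≤ dmin)
    (hdeg : ∀ s ∈ S,
      dmin ≤ (S.filter fun s' => s' ≠ s ∧ (s ∩ s').Nonempty).card ∧
        (S.filter fun s' => s' ≠ s ∧ (s ∩ s').Nonempty).card ≤ dmax)
    -- the intersection graph has at least one edge
    (hedge : ∃ s ∈ S, ∃ s' ∈ S, s ≠ s' ∧ (s ∩ s').Nonempty)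
    (μ : ℝ) (hμ : 0 ≤ μ)
    -- the natural tester of C has soundness μ
    (hsound : ∀ g : Fin n → Sig,
      μ * LC.hdistToCode g (LC.liftedCode S Cs) ≤
        ((LC.natViolations S Cs g).card : ℝ) / (S.card : ℝ)) :
    -- the 2-query tester T_{G,ℓ} of the line code L has the claimed soundness
    ∀ f : LC.Ensemble S Sig, (∀ s, f s ∈ Cs s.1) →
      (Dmin : ℝ) * (kmin : ℝ) * μ /
            ((dmax : ℝ) * (Dmax : ℝ) ^ 2 * (kmax : ℝ) ^ 2 *
              (μ + (Dmin : ℝ)⁻¹ * (Dmax : ℝ) * (kmax : ℝ))) *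
          LC.edistToCode f (LC.lineCode S Cs) ≤
        ((LC.interViolated S f).card : ℝ) / ((LC.interEdges S).card : ℝ) := by
  classical
  intro f hf
  set V := LC.interViolated S f with hVdef
  set E := LC.interEdges S with hEdef
  clear_value V E
  obtain ⟨s₀, hs₀S, s₁, hs₁S, hs01, hint01⟩ := hedge
  have hE_mem : ({s₀, s₁} : Finset (Finset (Fin n))) ∈ E := by
    rw [hEdef, LC.interEdges, Finset.mem_filter]
    exact ⟨Finset.mem_univ _, s₀, hs₀S, s₁, hs₁S, hs01, hint01, rfl⟩
  have hE1 : 1 ≤ E.card := Finset.card_pos.mpr ⟨_, hE_mem⟩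
  have hS1 : 1 ≤ S.card := Finset.card_pos.mpr hS
  have hkmax1 : 1 ≤ kmax := by
    obtain ⟨s, hs, hcard⟩ := hkmax.2
    have := Finset.card_pos.mpr (hne s hs); omega
  have hkmk : kmin ≤ kmax := by
    obtain ⟨s, hs, hcard⟩ := hkmin.2
    have := hkmax.1 s hs; omega
  have hDmin1 : 1 ≤ Dmin := by
    obtain ⟨i, hi⟩ := hDmin.2
    obtain ⟨s, hsS, hsi⟩ := hcover i
    have hmem : s ∈ S.filter fun s => i ∈ s := Finset.mem_filter.mpr ⟨hsS, hsi⟩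
    have := Finset.card_pos.mpr ⟨s, hmem⟩; omega
  have hDD : Dmin ≤ Dmax := by
    obtain ⟨i, hi⟩ := hDmin.2
    have := hDmax.1 i; omega
  have hDmax2 : 2 ≤ Dmax := by
    obtain ⟨i, hi⟩ := hint01
    have hsub : ({s₀, s₁} : Finset (Finset (Fin n))) ⊆ S.filter fun s => i ∈ s := by
      intro t ht
      rcases Finset.mem_insert.mp ht with rfl | ht
      · exact Finset.mem_filter.mpr ⟨hs₀S, (Finset.mem_inter.mp hi).1⟩
      · rw [Finset.mem_singleton.mp ht]
        exact Finset.mem_filter.mpr ⟨hs₁S, (Finset.mem_inter.mp hi).2⟩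
    have hc := Finset.card_le_card hsub
    rw [Finset.card_pair hs01] at hc
    exact le_trans hc (hDmax.1 i)
  have hdmax1 : 1 ≤ dmax := by
    have h1 := (hdeg s₀ hs₀S).2
    have hmem : s₁ ∈ S.filter fun s' => s' ≠ s₀ ∧ (s₀ ∩ s').Nonempty :=
      Finset.mem_filter.mpr ⟨hs₁S, hs01.symm, hint01⟩
    have := Finset.card_pos.mpr ⟨s₁, hmem⟩; omega
  -- edge count bound
  have hEP : E.card ≤ ((S ×ˢ S).filter
      (fun p : Finset (Fin n) × Finset (Fin n) => p.1 ≠ p.2 ∧ (p.1 ∩ p.2).Nonempty)).card := by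
    apply Finset.card_le_card_of_surjOn (fun p => {p.1, p.2})
    intro e he
    rw [Finset.mem_coe, hEdef, LC.interEdges, Finset.mem_filter] at he
    obtain ⟨-, s, hs, s', hs', hne', hint, rfl⟩ := he
    exact ⟨(s, s'), Finset.mem_coe.mpr (Finset.mem_filter.mpr
      ⟨Finset.mem_product.mpr ⟨hs, hs'⟩, hne', hint⟩), rfl⟩
  have hPS : ((S ×ˢ S).filter
      (fun p : Finset (Fin n) × Finset (Fin n) => p.1 ≠ p.2 ∧ (p.1 ∩ p.2).Nonempty)).card
      ≤ dmax * S.card := by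
    apply Finset.card_le_mul_card_image_of_maps_to (f := Prod.fst)
    · intro p hp
      exact (Finset.mem_product.mp (Finset.mem_filter.mp hp).1).1
    · intro s hsS
      calc _ ≤ (S.filter fun s' => s' ≠ s ∧ (s ∩ s').Nonempty).card := by
            apply Finset.card_le_card_of_injOn Prod.snd
            · rintro ⟨a, b⟩ hp
              obtain ⟨hpP, heq⟩ := Finset.mem_filter.mp hp
              obtain ⟨hprod, hne', hint⟩ := Finset.mem_filter.mp hpP
              dsimp at heq hne' hint
              subst heq
              exact Finset.mem_filter.mpr ⟨(Finset.mem_product.mp hprod).2, Ne.symm hne', hint⟩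
            · rintro ⟨a, b⟩ ha ⟨cc, d⟩ hc h
              obtain ⟨-, ha2⟩ := Finset.mem_filter.mp ha
              obtain ⟨-, hc2⟩ := Finset.mem_filter.mp hc
              dsimp at ha2 hc2 h
              rw [Prod.mk.injEq]; exact ⟨ha2.trans hc2.symm, h⟩
        _ ≤ dmax := (hdeg s hsS).2
  have hEdmax : E.card ≤ dmax * S.card := hEP.trans hPS
  -- double counting
  have hsum : n * Dmin ≤ S.card * kmax := by
    have h1 : ∑ i : Fin n, (S.filter fun s => i ∈ s).card = ∑ s ∈ S, s.card := by
      simp only [Finset.card_filter]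
      rw [Finset.sum_comm]
      refine Finset.sum_congr rfl fun s _ => ?_
      rw [← Finset.card_filter]
      simp
    have h2 : n * Dmin ≤ ∑ i : Fin n, (S.filter fun s => i ∈ s).card := by
      calc n * Dmin = ∑ _i : Fin n, Dmin := by simp [Finset.sum_const, mul_comm]
        _ ≤ _ := Finset.sum_le_sum fun i _ => hDmin.1 i
    have h3 : ∑ s ∈ S, s.card ≤ S.card * kmax := by
      calc ∑ s ∈ S, s.card ≤ ∑ _s ∈ S, kmax := Finset.sum_le_sum fun s hs => hkmax.1 s hs
        _ = S.card * kmax := by simp [Finset.sum_const]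
    omega
  rcases hμ.eq_or_lt with h0 | hμpos
  · rw [← h0]
    simp only [mul_zero, zero_div, zero_mul]
    positivity
  -- main case : μ > 0
  choose σ hσS hσi using hcover
  set g : Fin n → Sig := fun i => f ⟨σ i, hσS i⟩ ⟨i, hσi i⟩ with hgdef
  have fcongr : ∀ (a b : {s : Finset (Fin n) // s ∈ S}), a.1 = b.1 →
      ∀ (j : Fin n) (hja : j ∈ a.1) (hjb : j ∈ b.1), f a ⟨j, hja⟩ = f b ⟨j, hjb⟩ := by
    rintro ⟨a, ha⟩ ⟨b, hb⟩ h j hja hjb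
    dsimp at h; subst h; rfl
  set B := Finset.univ.filter
    (fun s : {s : Finset (Fin n) // s ∈ S} => LC.restrict g s.1 ≠ f s) with hBdef
  have key1 : ∀ s : {s : Finset (Fin n) // s ∈ S}, ∃ e : Finset (Finset (Fin n)),
      s ∈ B → e ∈ V ∧ s.1 ∈ e := by
    intro s
    by_cases hsB : s ∈ B
    · have hne' : LC.restrict g s.1 ≠ f s := by
        have := (Finset.mem_filter.mp hsB).2; exact this
      obtain ⟨i, hi⟩ := Function.ne_iff.mp hne'
      have hneq : s.1 ≠ σ i.1 := by
        intro h
        apply hi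
        calc LC.restrict g s.1 i = f ⟨σ i.1, hσS i.1⟩ ⟨i.1, hσi i.1⟩ := rfl
          _ = f s ⟨i.1, i.2⟩ := fcongr _ _ h.symm i.1 (hσi i.1) i.2
          _ = f s i := rfl
      refine ⟨{s.1, σ i.1}, fun _ => ⟨?_, Finset.mem_insert_self _ _⟩⟩
      rw [hVdef, LC.interViolated, Finset.mem_filter]
      refine ⟨Finset.mem_univ _, s.1, s.2, σ i.1, hσS i.1, hneq,
        ⟨i.1, Finset.mem_inter.mpr ⟨i.2, hσi i.1⟩⟩, rfl, ?_⟩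
      intro hcontra
      apply hi
      have h1 := congrFun hcontra ⟨i.1, Finset.mem_inter.mpr ⟨i.2, hσi i.1⟩⟩
      dsimp only at h1
      calc LC.restrict g s.1 i
          = f ⟨σ i.1, hσS i.1⟩ ⟨i.1, Finset.mem_of_mem_inter_right
              (Finset.mem_inter.mpr ⟨i.2, hσi i.1⟩)⟩ := rfl
        _ = f ⟨s.1, s.2⟩ ⟨i.1, Finset.mem_of_mem_inter_left
              (Finset.mem_inter.mpr ⟨i.2, hσi i.1⟩)⟩ := h1.symm
        _ = f s i := rfl
    · exact ⟨∅, fun h => absurd h hsB⟩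
  choose φ hφ using key1
  have hBV : B.card ≤ 2 * V.card := by
    apply Finset.card_le_mul_card_image_of_maps_to (f := φ)
    · exact fun s hs => (hφ s hs).1
    · intro e heV
      have hecard : e.card = 2 := by
        rw [hVdef, LC.interViolated, Finset.mem_filter] at heV
        obtain ⟨-, a, ha, b, hb, hab, -, rfl, -⟩ := heV
        exact Finset.card_pair hab
      calc (B.filter fun s => φ s = e).card ≤ e.card := by
            apply Finset.card_le_card_of_injOn (fun s => s.1)
            · intro a haf
              obtain ⟨haB, hae⟩ := Finset.mem_filter.mp haf
              exact hae ▸ (hφ a haB).2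
            · intro a _ b _ h; exact Subtype.ext h
        _ = 2 := hecard
  have hNVB : (LC.natViolations S Cs g).card ≤ B.card := by
    obtain ⟨sd, hsd⟩ := hS
    apply Finset.card_le_card_of_injOn
      (fun s => if h : s ∈ S then (⟨s, h⟩ : {s : Finset (Fin n) // s ∈ S}) else ⟨sd, hsd⟩)
    · intro s hsNV
      obtain ⟨hsS', hviol⟩ := Finset.mem_filter.mp hsNV
      dsimp only
      rw [dif_pos hsS']
      refine Finset.mem_filter.mpr ⟨Finset.mem_univ _, ?_⟩
      intro heqf
      exact hviol (by rw [heqf]; exact hf ⟨s, hsS'⟩)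
    · intro a haNV b hbNV h
      have ha := (Finset.mem_filter.mp haNV).1
      have hb := (Finset.mem_filter.mp hbNV).1
      simp only [dif_pos ha, dif_pos hb] at h
      exact congrArg Subtype.val h
  -- pass to the reals
  have sCpos : (0:ℝ) < S.card := by exact_mod_cast hS1
  have eCpos : (0:ℝ) < E.card := by exact_mod_cast hE1
  have nPos : (0:ℝ) < n := by exact_mod_cast hn
  have DminPos : (0:ℝ) < Dmin := by exact_mod_cast hDmin1
  have DmaxPos : (0:ℝ) < Dmax := by
    have : 0 < Dmax := by omega
    exact_mod_cast this
  have kmaxPos : (0:ℝ) < kmax := by exact_mod_cast hkmax1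
  have dmaxPos : (0:ℝ) < dmax := by exact_mod_cast hdmax1
  have hEdmaxR : (E.card : ℝ) ≤ dmax * S.card := by exact_mod_cast hEdmax
  have hsumR : (n : ℝ) * Dmin ≤ S.card * kmax := by exact_mod_cast hsum
  have hV0 : (0:ℝ) ≤ V.card := Nat.cast_nonneg _
  set K : ℝ := (Dmin : ℝ)⁻¹ * (Dmax : ℝ) * (kmax : ℝ) with hKdef
  have hKpos : 0 < K := by
    rw [hKdef]; exact mul_pos (mul_pos (inv_pos.mpr DminPos) DmaxPos) kmaxPos
  have hBVR : ((LC.natViolations S Cs g).card : ℝ) ≤ 2 * V.card := by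
    exact_mod_cast hNVB.trans hBV
  have hAA : 2 * (V.card:ℝ) / S.card ≤ 2 * dmax * V.card / E.card := by
    rw [div_le_div_iff₀ sCpos eCpos]
    nlinarith [mul_le_mul_of_nonneg_left hEdmaxR hV0]
  have hδ : μ * LC.hdistToCode g (LC.liftedCode S Cs) ≤ 2 * dmax * (V.card:ℝ) / E.card := by
    calc μ * _ ≤ ((LC.natViolations S Cs g).card : ℝ) / S.card := hsound g
      _ ≤ 2 * (V.card:ℝ) / S.card := (div_le_div_iff_of_pos_right sCpos).mpr hBVR
      _ ≤ _ := hAA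
  -- key estimate for every lifted codeword h
  have hbdd : BddBelow (LC.edist f '' LC.lineCode S Cs) := by
    refine ⟨0, ?_⟩
    rintro x ⟨w, -, rfl⟩
    unfold LC.edist
    positivity
  have hmain : ∀ h ∈ LC.liftedCode S Cs,
      LC.edistToCode f (LC.lineCode S Cs) ≤ 2 * (V.card:ℝ) / S.card + K * LC.hdist g h := by
    intro h hh
    set f' : LC.Ensemble S Sig := fun s => LC.restrict h s.1 with hf'def
    have hf'L : f' ∈ LC.lineCode S Cs :=
      ⟨fun s => hh s.1 s.2, fun s s' i hi hi' => rfl⟩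
    have hstep1 : LC.edistToCode f (LC.lineCode S Cs) ≤ LC.edist f f' :=
      csInf_le hbdd ⟨f', hf'L, rfl⟩
    set Dh := Finset.univ.filter
      (fun s : {s : Finset (Fin n) // s ∈ S} => LC.restrict g s.1 ≠ LC.restrict h s.1) with hDhdef
    have hMsub : (Finset.univ.filter fun s : {s : Finset (Fin n) // s ∈ S} => f s ≠ f' s)
        ⊆ B ∪ Dh := by
      intro s hs
      have hsne := (Finset.mem_filter.mp hs).2
      by_cases h1 : LC.restrict g s.1 = f s
      · refine Finset.mem_union_right _ (Finset.mem_filter.mpr ⟨Finset.mem_univ _, ?_⟩)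
        intro h2
        exact hsne (by rw [← h1]; exact h2)
      · exact Finset.mem_union_left _ (Finset.mem_filter.mpr ⟨Finset.mem_univ _, h1⟩)
    have key2 : ∀ s : {s : Finset (Fin n) // s ∈ S}, ∃ j : Fin n,
        s ∈ Dh → (g j ≠ h j ∧ j ∈ s.1) := by
      intro s
      by_cases hs : s ∈ Dh
      · have hne2 : LC.restrict g s.1 ≠ LC.restrict h s.1 := (Finset.mem_filter.mp hs).2
        obtain ⟨i, hi⟩ := Function.ne_iff.mp hne2
        exact ⟨i.1, fun _ => ⟨hi, i.2⟩⟩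
      · exact ⟨⟨0, lt_of_lt_of_le one_pos hn⟩, fun h' => absurd h' hs⟩
    choose ψ hψ using key2
    have hDhcard : Dh.card ≤ Dmax * (Finset.univ.filter fun i => g i ≠ h i).card := by
      apply Finset.card_le_mul_card_image_of_maps_to (f := ψ)
      · intro s hs
        exact Finset.mem_filter.mpr ⟨Finset.mem_univ _, (hψ s hs).1⟩
      · intro j hj
        calc (Dh.filter fun s => ψ s = j).card ≤ (S.filter fun s => j ∈ s).card := by
              apply Finset.card_le_card_of_injOn (fun s => s.1)
              · intro a ha
                obtain ⟨haDh, haj⟩ := Finset.mem_filter.mp ha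
                exact Finset.mem_filter.mpr ⟨a.2, haj ▸ (hψ a haDh).2⟩
              · intro a _ b _ hab; exact Subtype.ext hab
          _ ≤ Dmax := hDmax.1 j
    have hcard1 : (Finset.univ.filter fun s : {s : Finset (Fin n) // s ∈ S} => f s ≠ f' s).card
        ≤ B.card + Dh.card :=
      (Finset.card_le_card hMsub).trans (Finset.card_union_le _ _)
    set Δ := ((Finset.univ.filter fun i => g i ≠ h i).card : ℝ) with hΔdef
    have hhd : LC.hdist g h = Δ / n := rfl
    have hΔ0 : 0 ≤ Δ := by rw [hΔdef]; exact Nat.cast_nonneg _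
    clear_value Δ
    have hMR : ((Finset.univ.filter fun s : {s : Finset (Fin n) // s ∈ S} => f s ≠ f' s).card : ℝ)
        ≤ 2 * V.card + Dmax * Δ := by
      have hBR : (B.card : ℝ) ≤ 2 * V.card := by exact_mod_cast hBV
      have hDhR : (Dh.card : ℝ) ≤ (Dmax:ℝ) * Δ := by
        rw [hΔdef]; exact_mod_cast hDhcard
      have h1R : ((Finset.univ.filter fun s : {s : Finset (Fin n) // s ∈ S} => f s ≠ f' s).card : ℝ)
          ≤ (B.card : ℝ) + Dh.card := by exact_mod_cast hcard1
      linarith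
    have h4 : (Dmax:ℝ) * Δ / S.card ≤ K * (Δ / n) := by
      have hKeq : K * (Δ / n) = ((Dmax:ℝ) * kmax * Δ) / ((Dmin:ℝ) * n) := by
        rw [hKdef]; field_simp
      rw [hKeq, div_le_div_iff₀ sCpos (by positivity)]
      nlinarith [mul_le_mul_of_nonneg_left hsumR (mul_nonneg DmaxPos.le hΔ0)]
    calc LC.edistToCode f (LC.lineCode S Cs) ≤ LC.edist f f' := hstep1
      _ = ((Finset.univ.filter
            fun s : {s : Finset (Fin n) // s ∈ S} => f s ≠ f' s).card : ℝ) / S.card := rfl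
      _ ≤ (2 * (V.card:ℝ) + Dmax * Δ) / S.card := (div_le_div_iff_of_pos_right sCpos).mpr hMR
      _ = 2 * (V.card:ℝ) / S.card + (Dmax:ℝ) * Δ / S.card := by rw [add_div]
      _ ≤ 2 * (V.card:ℝ) / S.card + K * (Δ / n) := by linarith
      _ = 2 * (V.card:ℝ) / S.card + K * LC.hdist g h := by rw [hhd]
  -- combine over all h
  have hkey : LC.edistToCode f (LC.lineCode S Cs) ≤
      2 * dmax * (V.card:ℝ) / E.card + K * LC.hdistToCode g (LC.liftedCode S Cs) := by
    have hCne' : (LC.hdist g '' LC.liftedCode S Cs).Nonempty := hCne.image _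
    have h5 : (LC.edistToCode f (LC.lineCode S Cs) - 2 * (V.card:ℝ) / S.card) / K ≤
        LC.hdistToCode g (LC.liftedCode S Cs) := by
      apply le_csInf hCne'
      rintro b ⟨h, hh, rfl⟩
      rw [div_le_iff₀' hKpos]
      linarith [hmain h hh]
    rw [div_le_iff₀' hKpos] at h5
    -- h5 : e - A ≤ K * δ
    nlinarith [h5, hAA]
  have hδ2 : LC.hdistToCode g (LC.liftedCode S Cs) ≤ (2 * dmax * (V.card:ℝ) / E.card) / μ := by
    rw [le_div_iff₀ hμpos, mul_comm]
    exact hδ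
  have he_le : LC.edistToCode f (LC.lineCode S Cs) ≤
      2 * dmax * (V.card:ℝ) / E.card + K * ((2 * dmax * (V.card:ℝ) / E.card) / μ) := by
    have := mul_le_mul_of_nonneg_left hδ2 hKpos.le
    linarith
  set vE := (V.card : ℝ) / E.card with hvEdef
  have hvE0 : 0 ≤ vE := by positivity
  have hc0 : 0 ≤ (Dmin:ℝ) * (kmin:ℝ) * μ /
      ((dmax:ℝ) * (Dmax:ℝ) ^ 2 * (kmax:ℝ) ^ 2 * (μ + K)) := by
    have hμK : 0 < μ + K := by linarith
    positivity
  have hX : 2 * dmax * (V.card:ℝ) / E.card + K * ((2 * dmax * (V.card:ℝ) / E.card) / μ)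
      = (2 * dmax + K * (2 * dmax) / μ) * vE := by
    rw [hvEdef]; field_simp
  have hq : ((Dmin:ℝ) * (kmin:ℝ) * μ /
      ((dmax:ℝ) * (Dmax:ℝ) ^ 2 * (kmax:ℝ) ^ 2 * (μ + K))) * (2 * dmax + K * (2 * dmax) / μ)
      ≤ 1 := by
    have hμK : 0 < μ + K := by linarith
    have heq : ((Dmin:ℝ) * (kmin:ℝ) * μ /
        ((dmax:ℝ) * (Dmax:ℝ) ^ 2 * (kmax:ℝ) ^ 2 * (μ + K))) * (2 * dmax + K * (2 * dmax) / μ)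
        = 2 * Dmin * kmin / ((Dmax:ℝ) ^ 2 * (kmax:ℝ) ^ 2) := by
      rw [hKdef]
      field_simp
    rw [heq, div_le_one (by positivity)]
    have hDminR : (Dmin:ℝ) ≤ (Dmax:ℝ) := by exact_mod_cast hDD
    have hkminR : (kmin:ℝ) ≤ (kmax:ℝ) := by exact_mod_cast hkmk
    have hDmax2R : (2:ℝ) ≤ (Dmax:ℝ) := by exact_mod_cast hDmax2
    have hkmin0 : (0:ℝ) ≤ (kmin:ℝ) := Nat.cast_nonneg _
    have e1 : (2:ℝ) * Dmin ≤ (Dmax:ℝ) ^ 2 := by nlinarith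
    have hkmax1R : (1:ℝ) ≤ (kmax:ℝ) := by exact_mod_cast hkmax1
    have e2 : (kmin:ℝ) ≤ (kmax:ℝ) ^ 2 := by nlinarith
    calc 2 * (Dmin:ℝ) * kmin = (2 * (Dmin:ℝ)) * kmin := by ring
      _ ≤ (Dmax:ℝ) ^ 2 * (kmax:ℝ) ^ 2 :=
        mul_le_mul e1 e2 hkmin0 (by positivity)
  calc (Dmin:ℝ) * (kmin:ℝ) * μ /
        ((dmax:ℝ) * (Dmax:ℝ) ^ 2 * (kmax:ℝ) ^ 2 * (μ + K)) *
        LC.edistToCode f (LC.lineCode S Cs)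
      ≤ (Dmin:ℝ) * (kmin:ℝ) * μ /
        ((dmax:ℝ) * (Dmax:ℝ) ^ 2 * (kmax:ℝ) ^ 2 * (μ + K)) *
        ((2 * dmax + K * (2 * dmax) / μ) * vE) := by
        rw [← hX]; exact mul_le_mul_of_nonneg_left he_le hc0
    _ = (((Dmin:ℝ) * (kmin:ℝ) * μ /
        ((dmax:ℝ) * (Dmax:ℝ) ^ 2 * (kmax:ℝ) ^ 2 * (μ + K))) *
        (2 * dmax + K * (2 * dmax) / μ)) * vE := by ring
    _ ≤ 1 * vE := mul_le_mul_of_nonneg_right hq hvE0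
    _ = vE := one_mul _
end
end

section
/- Let X be a graded poset and let i ≤ j ≤ k ≤ ℓ be integers. Then F^min_{i,j,ℓ}(X)·F^min_{j,k,ℓ}(X) ≤ F^max_{i,k,ℓ}(X)·F^max_{i,j,k}(X) and F^max_{i,j,ℓ}(X)·F^max_{j,k,ℓ}(X) ≥ F^min_{i,k,ℓ}(X)·F^min_{i,j,k}(X). -/
open scoped Classical

noncomputable section

private lemma fmin_le_card {V : Type} [Fintype V] [PartialOrder V] (dim : V → ℤ)
    {a b c : ℤ} {p : V × V} (hp : p ∈ FK.incidentPairs dim a c) :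
    FK.Fmin dim a b c ≤ (FK.facesBetween dim b p.1 p.2).card := by
  rw [FK.Fmin, dif_pos ⟨p, hp⟩]
  exact Finset.min'_le _ _ (Finset.mem_image_of_mem _ hp)

private lemma card_le_fmax {V : Type} [Fintype V] [PartialOrder V] (dim : V → ℤ)
    {a b c : ℤ} {p : V × V} (hp : p ∈ FK.incidentPairs dim a c) :
    (FK.facesBetween dim b p.1 p.2).card ≤ FK.Fmax dim a b c :=
  Finset.le_sup (f := fun p => (FK.facesBetween dim b p.1 p.2).card) hp

private lemma mem_incidentPairs {V : Type} [Fintype V] [PartialOrder V] (dim : V → ℤ)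
    {a c : ℤ} {x t : V} (h1 : dim x = a) (h2 : dim t = c) (h3 : x ≤ t) :
    (x, t) ∈ FK.incidentPairs dim a c := by
  simp [FK.incidentPairs, h1, h2, h3]

/-- inequalities between the subface-counting constants of a graded poset. -/
theorem statement16
    (V : Type) [Fintype V] [PartialOrder V] (dim : V → ℤ)
    (hgraded : FK.IsGraded dim)
    (i j k l : ℤ) (hij : i ≤ j) (hjk : j ≤ k) (hkl : k ≤ l) :
    FK.Fmin dim i j l * FK.Fmin dim j k l ≤ FK.Fmax dim i k l * FK.Fmax dim i j k ∧
    FK.Fmin dim i k l * FK.Fmin dim i j k ≤ FK.Fmax dim i j l * FK.Fmax dim j k l := by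
  classical
  by_cases hP : (FK.incidentPairs dim i l).Nonempty
  · obtain ⟨p, hp⟩ := hP
    obtain ⟨x, t⟩ := p
    have hpm := hp
    simp only [FK.incidentPairs, Finset.mem_filter, Finset.mem_univ, true_and] at hpm
    obtain ⟨hdx, hdt, hxt⟩ := hpm
    set T := FK.facesBetween dim j x t with hT
    set S := FK.facesBetween dim k x t with hS
    -- facts about members
    have hTmem : ∀ y ∈ T, dim y = j ∧ x ≤ y ∧ y ≤ t := by
      intro y hy
      simpa [hT, FK.facesBetween] using hy
    have hSmem : ∀ z ∈ S, dim z = k ∧ x ≤ z ∧ z ≤ t := by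
      intro z hz
      simpa [hS, FK.facesBetween] using hz
    -- double counting identity
    have hleft : ∀ z ∈ S, FK.facesBetween dim j x z = T.filter (fun y => y ≤ z) := by
      intro z hz
      obtain ⟨_, _, hzt⟩ := hSmem z hz
      ext y
      simp only [FK.facesBetween, hT, Finset.mem_filter, Finset.mem_univ, true_and]
      constructor
      · rintro ⟨h1, h2, h3⟩; exact ⟨⟨h1, h2, le_trans h3 hzt⟩, h3⟩
      · rintro ⟨⟨h1, h2, _⟩, h3⟩; exact ⟨h1, h2, h3⟩
    have hright : ∀ y ∈ T, FK.facesBetween dim k y t = S.filter (fun z => y ≤ z) := by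
      intro y hy
      obtain ⟨_, hxy, _⟩ := hTmem y hy
      ext z
      simp only [FK.facesBetween, hS, Finset.mem_filter, Finset.mem_univ, true_and]
      constructor
      · rintro ⟨h1, h2, h3⟩; exact ⟨⟨h1, le_trans hxy h2, h3⟩, h2⟩
      · rintro ⟨⟨h1, _, h3⟩, h2⟩; exact ⟨h1, h2, h3⟩
    have key : ∑ z ∈ S, (FK.facesBetween dim j x z).card
        = ∑ y ∈ T, (FK.facesBetween dim k y t).card := by
      calc ∑ z ∈ S, (FK.facesBetween dim j x z).card
          = ∑ z ∈ S, ∑ y ∈ T, (if y ≤ z then 1 else 0) := by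
            refine Finset.sum_congr rfl fun z hz => ?_
            rw [hleft z hz, Finset.card_filter]
        _ = ∑ y ∈ T, ∑ z ∈ S, (if y ≤ z then 1 else 0) := Finset.sum_comm
        _ = ∑ y ∈ T, (FK.facesBetween dim k y t).card := by
            refine Finset.sum_congr rfl fun y hy => ?_
            rw [hright y hy, Finset.card_filter]
    have hTcard_ub : T.card ≤ FK.Fmax dim i j l := card_le_fmax dim hp
    have hScard_ub : S.card ≤ FK.Fmax dim i k l := card_le_fmax dim hp
    have hTcard_lb : FK.Fmin dim i j l ≤ T.card := fmin_le_card dim hp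
    have hScard_lb : FK.Fmin dim i k l ≤ S.card := fmin_le_card dim hp
    have hsum_ub1 : ∑ z ∈ S, (FK.facesBetween dim j x z).card
        ≤ FK.Fmax dim i k l * FK.Fmax dim i j k := by
      calc ∑ z ∈ S, (FK.facesBetween dim j x z).card
          ≤ S.card * FK.Fmax dim i j k := by
            simpa using Finset.sum_le_card_nsmul S _ (FK.Fmax dim i j k)
              (fun z hz => card_le_fmax dim
                (mem_incidentPairs dim hdx (hSmem z hz).1 (hSmem z hz).2.1))
        _ ≤ FK.Fmax dim i k l * FK.Fmax dim i j k :=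
            Nat.mul_le_mul_right _ hScard_ub
    have hsum_lb1 : FK.Fmin dim i j l * FK.Fmin dim j k l
        ≤ ∑ y ∈ T, (FK.facesBetween dim k y t).card := by
      calc FK.Fmin dim i j l * FK.Fmin dim j k l
          ≤ T.card * FK.Fmin dim j k l := Nat.mul_le_mul_right _ hTcard_lb
        _ ≤ ∑ y ∈ T, (FK.facesBetween dim k y t).card := by
            simpa using Finset.card_nsmul_le_sum T _ (FK.Fmin dim j k l)
              (fun y hy => fmin_le_card dim
                (mem_incidentPairs dim (hTmem y hy).1 hdt (hTmem y hy).2.2))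
    have hsum_ub2 : ∑ y ∈ T, (FK.facesBetween dim k y t).card
        ≤ FK.Fmax dim i j l * FK.Fmax dim j k l := by
      calc ∑ y ∈ T, (FK.facesBetween dim k y t).card
          ≤ T.card * FK.Fmax dim j k l := by
            simpa using Finset.sum_le_card_nsmul T _ (FK.Fmax dim j k l)
              (fun y hy => card_le_fmax dim
                (mem_incidentPairs dim (hTmem y hy).1 hdt (hTmem y hy).2.2))
        _ ≤ FK.Fmax dim i j l * FK.Fmax dim j k l :=
            Nat.mul_le_mul_right _ hTcard_ub
    have hsum_lb2 : FK.Fmin dim i k l * FK.Fmin dim i j k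
        ≤ ∑ z ∈ S, (FK.facesBetween dim j x z).card := by
      calc FK.Fmin dim i k l * FK.Fmin dim i j k
          ≤ S.card * FK.Fmin dim i j k := Nat.mul_le_mul_right _ hScard_lb
        _ ≤ ∑ z ∈ S, (FK.facesBetween dim j x z).card := by
            simpa using Finset.card_nsmul_le_sum S _ (FK.Fmin dim i j k)
              (fun z hz => fmin_le_card dim
                (mem_incidentPairs dim hdx (hSmem z hz).1 (hSmem z hz).2.1))
    constructor
    · exact le_trans hsum_lb1 (le_trans key.symm.le hsum_ub1)
    · exact le_trans hsum_lb2 (le_trans key.le hsum_ub2)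
  · have h1 : FK.Fmin dim i j l = 0 := by rw [FK.Fmin, dif_neg hP]
    have h2 : FK.Fmin dim i k l = 0 := by rw [FK.Fmin, dif_neg hP]
    simp [h1, h2]
end
end

section
/- Let (X,w) be a properly weighted d-poset, let −1 ≤ i ≤ j ≤ d be integers, and let z ∈ X(i). Then (F^min_{i,j,d}·F^min_{i,d}/F^max_{j,d})·w(z) ≤ w(X(j)_z) ≤ (F^max_{i,j,d}·F^max_{i,d}/F^min_{j,d})·w(z), where X(j)_z = {x ∈ X(j) : x ≥ z}. -/
open scoped Classical

noncomputable section

section Aux17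

open FK Finset

variable {V : Type*} [Fintype V] [PartialOrder V]

lemma aux17_exists_dim_between {dim : V → ℤ}
    (hcov : ∀ ⦃x y : V⦄, x ⋖ y → dim y = dim x + 1) {j : ℤ} :
    ∀ n : ℕ, ∀ x y : V, x ≤ y → dim x ≤ j → j ≤ dim y → (j - dim x).toNat ≤ n →
      ∃ t, dim t = j ∧ x ≤ t ∧ t ≤ y := by
  intro n
  induction n with
  | zero =>
    intro x y hxy hxj hjy hn
    exact ⟨x, by omega, le_rfl, hxy⟩
  | succ n ih =>
    intro x y hxy hxj hjy hn
    by_cases hx : dim x = j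
    · exact ⟨x, hx, le_rfl, hxy⟩
    have hxj' : dim x < j := lt_of_le_of_ne hxj hx
    have hxy' : x < y := lt_of_le_of_ne hxy (by rintro rfl; omega)
    have hyS : y ∈ Finset.univ.filter fun t => x < t ∧ t ≤ y := by simp [hxy']
    obtain ⟨m, hmS, hmin⟩ : ∃ m ∈ Finset.univ.filter (fun t => x < t ∧ t ≤ y),
        ∀ s ∈ Finset.univ.filter (fun t => x < t ∧ t ≤ y), ¬s < m := by
      obtain ⟨m, hm⟩ := Finset.exists_minimal ⟨y, hyS⟩
      exact ⟨m, hm.1, fun s hs hlt => lt_irrefl s (hlt.trans_le (hm.2 hs hlt.le))⟩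
    simp only [Finset.mem_filter, Finset.mem_univ, true_and] at hmS
    have hcb : x ⋖ m := by
      refine ⟨hmS.1, fun s hxs hsm => ?_⟩
      refine hmin s ?_ hsm
      simp only [Finset.mem_filter, Finset.mem_univ, true_and]
      exact ⟨hxs, hsm.le.trans hmS.2⟩
    have hdm : dim m = dim x + 1 := hcov hcb
    obtain ⟨t, ht1, ht2, ht3⟩ := ih m y hmS.2 (by omega) hjy (by omega)
    exact ⟨t, ht1, hcb.1.le.trans ht2, ht3⟩

lemma aux17_one_le_between {dim : V → ℤ}
    (hcov : ∀ ⦃x y : V⦄, x ⋖ y → dim y = dim x + 1) {j : ℤ} {x y : V}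
    (hxy : x ≤ y) (hxj : dim x ≤ j) (hjy : j ≤ dim y) :
    1 ≤ (facesBetween dim j x y).card := by
  obtain ⟨t, h1, h2, h3⟩ :=
    aux17_exists_dim_between hcov (j - dim x).toNat x y hxy hxj hjy le_rfl
  refine Finset.card_pos.mpr ⟨t, ?_⟩
  simp [facesBetween, h1, h2, h3]

lemma aux17_mem_incidentPairs {dim : V → ℤ} {i k : ℤ} {x y : V}
    (hx : dim x = i) (hy : dim y = k) (hxy : x ≤ y) :
    ((x, y) : V × V) ∈ incidentPairs dim i k := by
  simp [incidentPairs, hx, hy, hxy]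

lemma aux17_le_Fmax {dim : V → ℤ} {i k : ℤ} {x y : V} (hx : dim x = i) (hy : dim y = k)
    (hxy : x ≤ y) (j : ℤ) :
    (facesBetween dim j x y).card ≤ Fmax dim i j k :=
  Finset.le_sup (f := fun p => (facesBetween dim j p.1 p.2).card)
    (aux17_mem_incidentPairs hx hy hxy)

lemma aux17_Fmin_le {dim : V → ℤ} {i k : ℤ} {x y : V} (hx : dim x = i) (hy : dim y = k)
    (hxy : x ≤ y) (j : ℤ) :
    Fmin dim i j k ≤ (facesBetween dim j x y).card := by
  have hmem := aux17_mem_incidentPairs hx hy hxy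
  rw [Fmin, dif_pos ⟨_, hmem⟩]
  exact Finset.min'_le _ _ (Finset.mem_image_of_mem _ hmem)

lemma aux17_one_le_Fmin {dim : V → ℤ}
    (hcov : ∀ ⦃x y : V⦄, x ⋖ y → dim y = dim x + 1) {i j k : ℤ} (hij : i ≤ j) (hjk : j ≤ k)
    (hne : (FK.incidentPairs dim i k).Nonempty) :
    1 ≤ Fmin dim i j k := by
  rw [Fmin, dif_pos hne]
  have h := Finset.min'_mem
    ((FK.incidentPairs dim i k).image fun p => (facesBetween dim j p.1 p.2).card) (hne.image _)
  rw [Finset.mem_image] at h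
  obtain ⟨p, hp, hpe⟩ := h
  simp only [incidentPairs, Finset.mem_filter, Finset.mem_univ, true_and] at hp
  rw [← hpe]
  exact aux17_one_le_between hcov hp.2.2 (by omega) (by omega)

end Aux17

/-- bounds on the total weight of the `j`-faces above a fixed `i`-face. -/
theorem statement17
    (V : Type) [Fintype V] [PartialOrder V] (dim : V → ℤ) (d : ℤ) (bot : V)
    (hX : FK.IsDPoset dim d bot)
    (w : V → ℝ) (hw : FK.IsProperWeight dim d w)
    (i j : ℤ) (hi : -1 ≤ i) (hij : i ≤ j) (hjd : j ≤ d)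
    (z : V) (hz : dim z = i) :
    (FK.Fmin dim i j d : ℝ) * (FK.Fmin dim (-1) i d : ℝ) / (FK.Fmax dim (-1) j d : ℝ) * w z ≤
        FK.wsum w (FK.facesAbove dim j z) ∧
      FK.wsum w (FK.facesAbove dim j z) ≤
        (FK.Fmax dim i j d : ℝ) * (FK.Fmax dim (-1) i d : ℝ) / (FK.Fmin dim (-1) j d : ℝ) * w z := by
  classical
  obtain ⟨y₀, hy₀z, hy₀d⟩ := hX.pure z
  have hcov := hX.dim_covBy
  have hbot := hX.dim_bot
  -- D : the d-faces above z
  have hDm : ∀ y ∈ FK.facesAbove dim d z, dim y = d ∧ z ≤ y := by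
    intro y hy; simpa [FK.facesAbove] using hy
  have hy₀D : y₀ ∈ FK.facesAbove dim d z := by simp [FK.facesAbove, hy₀d, hy₀z]
  -- facesBelow as facesBetween from bot
  have hbelow : ∀ (k : ℤ) (y : V), FK.facesBelow dim k y = FK.facesBetween dim k bot y := by
    intro k y; ext t
    simp [FK.facesBelow, FK.facesBetween, hX.bot_le t]
  -- constants
  set na : ℝ := (FK.Fmin dim i j d : ℝ) with hna
  set nb : ℝ := (FK.Fmin dim (-1) i d : ℝ) with hnb
  set nc : ℝ := (FK.Fmax dim (-1) j d : ℝ) with hnc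
  set NA : ℝ := (FK.Fmax dim i j d : ℝ) with hNA
  set NB : ℝ := (FK.Fmax dim (-1) i d : ℝ) with hNB
  set NC : ℝ := (FK.Fmin dim (-1) j d : ℝ) with hNC
  have hpair0 : (FK.incidentPairs dim (-1) d).Nonempty :=
    ⟨(bot, y₀), aux17_mem_incidentPairs hbot hy₀d (hX.bot_le y₀)⟩
  have hpairi : (FK.incidentPairs dim i d).Nonempty :=
    ⟨(z, y₀), aux17_mem_incidentPairs hz hy₀d hy₀z⟩
  have hid : i ≤ d := hij.trans hjd
  have hna1 : 1 ≤ na := by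
    rw [hna]; exact_mod_cast aux17_one_le_Fmin hcov hij hjd hpairi
  have hnb1 : 1 ≤ nb := by
    rw [hnb]; exact_mod_cast aux17_one_le_Fmin hcov hi hid hpair0
  have hNC1 : 1 ≤ NC := by
    rw [hNC]; exact_mod_cast aux17_one_le_Fmin hcov (hi.trans hij) hjd hpair0
  have hnc1 : 1 ≤ nc := by
    rw [hnc]
    have h1 : (1 : ℕ) ≤ (FK.facesBetween dim j bot y₀).card :=
      aux17_one_le_between hcov (hX.bot_le y₀) (by omega) (by omega)
    have h2 := aux17_le_Fmax hbot hy₀d (hX.bot_le y₀) j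
    exact_mod_cast h1.trans h2
  have hNB1 : 1 ≤ NB := by
    rw [hNB]
    have h1 : (1 : ℕ) ≤ (FK.facesBetween dim i bot y₀).card :=
      aux17_one_le_between hcov (hX.bot_le y₀) (by omega) (by omega)
    have h2 := aux17_le_Fmax hbot hy₀d (hX.bot_le y₀) i
    exact_mod_cast h1.trans h2
  have hNA1 : 1 ≤ NA := by
    rw [hNA]
    have h1 : (1 : ℕ) ≤ (FK.facesBetween dim j z y₀).card :=
      aux17_one_le_between hcov hy₀z (by omega) (by omega)
    have h2 := aux17_le_Fmax hz hy₀d hy₀z j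
    exact_mod_cast h1.trans h2
  -- per-face bounds over D
  have hcjpos : ∀ y ∈ FK.facesAbove dim d z, (0:ℝ) < ((FK.facesBelow dim j y).card : ℝ) := by
    intro y hy
    obtain ⟨hyd, hzy⟩ := hDm y hy
    rw [hbelow]
    exact_mod_cast aux17_one_le_between hcov (hX.bot_le y) (by omega) (by omega)
  have hcipos : ∀ y ∈ FK.facesAbove dim d z, (0:ℝ) < ((FK.facesBelow dim i y).card : ℝ) := by
    intro y hy
    obtain ⟨hyd, hzy⟩ := hDm y hy
    rw [hbelow]
    exact_mod_cast aux17_one_le_between hcov (hX.bot_le y) (by omega) (by omega)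
  have hcjle : ∀ y ∈ FK.facesAbove dim d z, ((FK.facesBelow dim j y).card : ℝ) ≤ nc := by
    intro y hy
    obtain ⟨hyd, hzy⟩ := hDm y hy
    rw [hbelow, hnc]
    exact_mod_cast aux17_le_Fmax hbot hyd (hX.bot_le y) j
  have hcjge : ∀ y ∈ FK.facesAbove dim d z, NC ≤ ((FK.facesBelow dim j y).card : ℝ) := by
    intro y hy
    obtain ⟨hyd, hzy⟩ := hDm y hy
    rw [hbelow, hNC]
    exact_mod_cast aux17_Fmin_le hbot hyd (hX.bot_le y) j
  have hcile : ∀ y ∈ FK.facesAbove dim d z, ((FK.facesBelow dim i y).card : ℝ) ≤ NB := by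
    intro y hy
    obtain ⟨hyd, hzy⟩ := hDm y hy
    rw [hbelow, hNB]
    exact_mod_cast aux17_le_Fmax hbot hyd (hX.bot_le y) i
  have hcige : ∀ y ∈ FK.facesAbove dim d z, nb ≤ ((FK.facesBelow dim i y).card : ℝ) := by
    intro y hy
    obtain ⟨hyd, hzy⟩ := hDm y hy
    rw [hbelow, hnb]
    exact_mod_cast aux17_Fmin_le hbot hyd (hX.bot_le y) i
  have hnge : ∀ y ∈ FK.facesAbove dim d z, na ≤ ((FK.facesBetween dim j z y).card : ℝ) := by
    intro y hy
    obtain ⟨hyd, hzy⟩ := hDm y hy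
    rw [hna]
    exact_mod_cast aux17_Fmin_le hz hyd hzy j
  have hnle : ∀ y ∈ FK.facesAbove dim d z, ((FK.facesBetween dim j z y).card : ℝ) ≤ NA := by
    intro y hy
    obtain ⟨hyd, hzy⟩ := hDm y hy
    rw [hNA]
    exact_mod_cast aux17_le_Fmax hz hyd hzy j
  -- the key double-counting identity
  have hW : FK.wsum w (FK.facesAbove dim j z)
      = ∑ y ∈ FK.facesAbove dim d z,
          ((FK.facesBetween dim j z y).card : ℝ) * (w y / ((FK.facesBelow dim j y).card : ℝ)) := by
    rw [FK.wsum]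
    have h1 : ∀ x ∈ FK.facesAbove dim j z,
        w x = ∑ y ∈ FK.facesAbove dim d z,
          if x ≤ y then w y / ((FK.facesBelow dim j y).card : ℝ) else 0 := by
      intro x hx
      have hx' : dim x = j ∧ z ≤ x := by simpa [FK.facesAbove] using hx
      rw [hw.eq x, hx'.1, ← Finset.sum_filter]
      apply Finset.sum_congr _ (fun _ _ => rfl)
      ext y
      simp only [FK.facesAbove, Finset.mem_filter, Finset.mem_univ, true_and]
      exact ⟨fun h => ⟨⟨h.1, hx'.2.trans h.2⟩, h.2⟩, fun h => ⟨h.1.1, h.2⟩⟩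
    rw [Finset.sum_congr rfl h1, Finset.sum_comm]
    refine Finset.sum_congr rfl fun y hy => ?_
    rw [← Finset.sum_filter, Finset.sum_const, nsmul_eq_mul]
    have hcard : (FK.facesAbove dim j z).filter (fun x => x ≤ y) = FK.facesBetween dim j z y := by
      ext x
      simp only [FK.facesAbove, FK.facesBetween, Finset.mem_filter, Finset.mem_univ, true_and]
      tauto
    rw [hcard]
  -- w z as a sum over D
  have hz' : w z = ∑ y ∈ FK.facesAbove dim d z, w y / ((FK.facesBelow dim i y).card : ℝ) := by
    rw [hw.eq z, hz]
  set S : ℝ := ∑ y ∈ FK.facesAbove dim d z, w y with hS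
  have h_bz : nb * w z ≤ S := by
    have h1 : w z ≤ S / nb := by
      rw [hz', hS, Finset.sum_div]
      refine Finset.sum_le_sum fun y hy => ?_
      exact div_le_div_of_nonneg_left (hw.pos y).le (lt_of_lt_of_le one_pos hnb1) (hcige y hy)
    calc nb * w z ≤ nb * (S / nb) := by
          exact mul_le_mul_of_nonneg_left h1 (by linarith)
      _ = S := by field_simp
  have h_Bz : S ≤ NB * w z := by
    have h1 : S / NB ≤ w z := by
      rw [hz', hS, Finset.sum_div]
      refine Finset.sum_le_sum fun y hy => ?_
      exact div_le_div_of_nonneg_left (hw.pos y).le (hcipos y hy) (hcile y hy)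
    calc S = NB * (S / NB) := by field_simp
      _ ≤ NB * w z := mul_le_mul_of_nonneg_left h1 (by linarith)
  have hW_low : na / nc * S ≤ FK.wsum w (FK.facesAbove dim j z) := by
    rw [hW, hS, Finset.mul_sum]
    refine Finset.sum_le_sum fun y hy => ?_
    have h1 : w y / nc ≤ w y / ((FK.facesBelow dim j y).card : ℝ) :=
      div_le_div_of_nonneg_left (hw.pos y).le (hcjpos y hy) (hcjle y hy)
    have h2 : na / nc * w y = na * (w y / nc) := by ring
    rw [h2]
    refine mul_le_mul (hnge y hy) h1 ?_ (by linarith)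
    exact div_nonneg (hw.pos y).le (by linarith)
  have hW_up : FK.wsum w (FK.facesAbove dim j z) ≤ NA / NC * S := by
    rw [hW, hS, Finset.mul_sum]
    refine Finset.sum_le_sum fun y hy => ?_
    have h1 : w y / ((FK.facesBelow dim j y).card : ℝ) ≤ w y / NC :=
      div_le_div_of_nonneg_left (hw.pos y).le (lt_of_lt_of_le one_pos hNC1) (hcjge y hy)
    have h2 : NA / NC * w y = NA * (w y / NC) := by ring
    rw [h2]
    refine mul_le_mul (hnle y hy) h1 ?_ (by positivity)
    exact div_nonneg (hw.pos y).le (Nat.cast_nonneg _)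
  constructor
  · calc na * nb / nc * w z = na / nc * (nb * w z) := by ring
      _ ≤ na / nc * S := mul_le_mul_of_nonneg_left h_bz (div_nonneg (by linarith) (by linarith))
      _ ≤ _ := hW_low
  · calc FK.wsum w (FK.facesAbove dim j z) ≤ NA / NC * S := hW_up
      _ ≤ NA / NC * (NB * w z) := mul_le_mul_of_nonneg_left h_Bz (div_nonneg (by linarith) (by linarith))
      _ = NA * NB / NC * w z := by ring
end
end
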